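/- arXiv:0807.2205 — 2 statements merged into one kernel-verified Lean document; each statement's English description precedes it below -/
import Mathlib

section
/- Suppose 𝒜 ⊆ E^∞ is open or closed. Then there is a block subspace X such that either (1) II has a strategy in the relational game A_X to play in 𝒜, or (2) I has a strategy in the relational game B_X to play in ∼𝒜. -/
section Defs

variable {𝔽 : Type} [Field 𝔽] {E : Type} [AddCommGroup E] [Module 𝔽 E]

/-- The support of a vector with respect to the basis `b`. -/
noncomputable def supp (b : Module.Basis ℕ 𝔽 E) (x : E) : Finset ℕ :=
  (b.repr x).support

/-- `VecLt b x y` means `x < y`: every element of the support of `x` is smaller than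
every element of the support of `y`. -/
def VecLt (b : Module.Basis ℕ 𝔽 E) (x y : E) : Prop :=
  ∀ m ∈ supp b x, ∀ n ∈ supp b y, m < n

/-- `NatLt b k x` means `k < x`: `k` is smaller than every element of the support of `x`. -/
def NatLt (b : Module.Basis ℕ 𝔽 E) (k : ℕ) (x : E) : Prop :=
  ∀ n ∈ supp b x, k < n

/-- An infinite block sequence: a sequence of nonzero vectors with `x n < x (n + 1)`. -/
def IsBlockSeq (b : Module.Basis ℕ 𝔽 E) (x : ℕ → E) : Prop :=
  (∀ n, x n ≠ 0) ∧ ∀ n, VecLt b (x n) (x (n + 1))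

/-- A finite block sequence: a list of nonzero vectors, consecutively increasing in the
block ordering. -/
def IsFinBlockSeq (b : Module.Basis ℕ 𝔽 E) (l : List E) : Prop :=
  (∀ x ∈ l, x ≠ 0) ∧ l.Chain' (VecLt b)

/-- A block subspace: a subspace spanned by an infinite block sequence. -/
def IsBlockSubspace (b : Module.Basis ℕ 𝔽 E) (X : Submodule 𝔽 E) : Prop :=
  ∃ y : ℕ → E, IsBlockSeq b y ∧ X = Submodule.span 𝔽 (Set.range y)

/-- The list of the first `n` values of a sequence. -/
def hist {α : Type _} (x : ℕ → α) (n : ℕ) : List α :=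
  List.ofFn (fun j : Fin n => x j)

/-- The concatenation of a finite prefix with an infinite sequence. -/
def prefCat {α : Type _} (l : List α) (x : ℕ → α) : ℕ → α := fun n =>
  if h : n < l.length then l.get ⟨n, h⟩ else x (n - l.length)

/-- The interleaving `x 0, y 0, x 1, y 1, …` of two sequences. -/
def interleave {α : Type _} (x y : ℕ → α) : ℕ → α := fun k =>
  if k % 2 = 0 then x (k / 2) else y (k / 2)

/-- Helper: the sequence of integers produced by a strategy answering plays
`p i : E × Submodule 𝔽 E` with a vector and an integer, starting with `n0`. -/
def natsA (n0 : ℕ) (σ : List (E × Submodule 𝔽 E) → E × ℕ)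
    (p : ℕ → E × Submodule 𝔽 E) : ℕ → ℕ
  | 0 => n0
  | k + 1 => (σ (hist p (k + 1))).2

/-- Player II has a strategy in the relational game `A_X(pre)` to play in `A`
(case of an even-length prefix): II opens with an integer `n0`; I plays nonzero vectors
`x i ∈ X` with `n i < x i`, forming a block sequence, together with block subspaces
`Z i ≤ X`; II answers with a nonzero vector `y i ∈ Z i` (II's vectors forming a block
sequence) and the next integer `n (i+1)`, the integers being strictly increasing.  The
outcome is `pre` followed by `x 0, y 0, x 1, y 1, …`. -/
def IIWinsAEven (b : Module.Basis ℕ 𝔽 E) (X : Submodule 𝔽 E) (pre : List E)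
    (A : Set (ℕ → E)) : Prop :=
  ∃ (n0 : ℕ) (σ : List (E × Submodule 𝔽 E) → E × ℕ),
    ∀ p : ℕ → E × Submodule 𝔽 E,
      (∀ i, (p i).1 ∈ X ∧ (p i).1 ≠ 0 ∧ NatLt b (natsA n0 σ p i) (p i).1 ∧
          VecLt b (p i).1 (p (i + 1)).1 ∧ IsBlockSubspace b (p i).2 ∧ (p i).2 ≤ X) →
      (∀ i, (σ (hist p (i + 1))).1 ∈ (p i).2 ∧ (σ (hist p (i + 1))).1 ≠ 0 ∧
          VecLt b (σ (hist p (i + 1))).1 (σ (hist p (i + 2))).1 ∧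
          natsA n0 σ p i < natsA n0 σ p (i + 1)) ∧
        prefCat pre
          (interleave (fun i => (p i).1) (fun i => (σ (hist p (i + 1))).1)) ∈ A

/-- Player II has a strategy in the relational game `A_X(pre)` to play in `A`
(case of an odd-length prefix): I plays block subspaces `Z i ≤ X` together with nonzero
vectors `x i ∈ X` (to accompany `Z (i+1)`) with `n i < x i`, the `x i` forming a block
sequence; II answers `Z i` with a nonzero vector `y i ∈ Z i` (II's vectors forming a
block sequence) and a strictly increasing integer `n i`.  The outcome is `pre` followed
by `y 0, x 0, y 1, x 1, …`. -/
def IIWinsAOdd (b : Module.Basis ℕ 𝔽 E) (X : Submodule 𝔽 E) (pre : List E)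
    (A : Set (ℕ → E)) : Prop :=
  ∃ σ : List (Submodule 𝔽 E × E) → Submodule 𝔽 E → E × ℕ,
    ∀ (Z : ℕ → Submodule 𝔽 E) (x : ℕ → E),
      (∀ i, IsBlockSubspace b (Z i) ∧ Z i ≤ X ∧ x i ∈ X ∧ x i ≠ 0 ∧
          NatLt b (σ (hist (fun j => (Z j, x j)) i) (Z i)).2 (x i) ∧
          VecLt b (x i) (x (i + 1))) →
      (∀ i, (σ (hist (fun j => (Z j, x j)) i) (Z i)).1 ∈ Z i ∧
          (σ (hist (fun j => (Z j, x j)) i) (Z i)).1 ≠ 0 ∧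
          VecLt b (σ (hist (fun j => (Z j, x j)) i) (Z i)).1
            (σ (hist (fun j => (Z j, x j)) (i + 1)) (Z (i + 1))).1 ∧
          (σ (hist (fun j => (Z j, x j)) i) (Z i)).2 <
            (σ (hist (fun j => (Z j, x j)) (i + 1)) (Z (i + 1))).2) ∧
        prefCat pre
          (interleave (fun i => (σ (hist (fun j => (Z j, x j)) i) (Z i)).1) x) ∈ A

/-- Player II has a strategy in the relational game `A_X(pre)` to play in `A`. -/
def IIWinsA (b : Module.Basis ℕ 𝔽 E) (X : Submodule 𝔽 E) (pre : List E)
    (A : Set (ℕ → E)) : Prop :=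
  if pre.length % 2 = 0 then IIWinsAEven b X pre A else IIWinsAOdd b X pre A

/-- Player I has a strategy in the relational game `B_X(pre)` to play in `A`
(case of an even-length prefix): II plays block subspaces `Z i ≤ X` and nonzero vectors
`y i ∈ X` with `n i < y i`, II's vectors forming a block sequence; I answers `Z i` with
a nonzero vector `x i ∈ Z i` (I's vectors forming a block sequence) and a strictly
increasing integer `n i`.  The outcome is `pre` followed by `x 0, y 0, x 1, y 1, …`. -/
def IWinsBEven (b : Module.Basis ℕ 𝔽 E) (X : Submodule 𝔽 E) (pre : List E)
    (A : Set (ℕ → E)) : Prop :=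
  ∃ τ : List (Submodule 𝔽 E × E) → Submodule 𝔽 E → E × ℕ,
    ∀ (Z : ℕ → Submodule 𝔽 E) (y : ℕ → E),
      (∀ i, IsBlockSubspace b (Z i) ∧ Z i ≤ X ∧ y i ∈ X ∧ y i ≠ 0 ∧
          NatLt b (τ (hist (fun j => (Z j, y j)) i) (Z i)).2 (y i) ∧
          VecLt b (y i) (y (i + 1))) →
      (∀ i, (τ (hist (fun j => (Z j, y j)) i) (Z i)).1 ∈ Z i ∧
          (τ (hist (fun j => (Z j, y j)) i) (Z i)).1 ≠ 0 ∧
          VecLt b (τ (hist (fun j => (Z j, y j)) i) (Z i)).1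
            (τ (hist (fun j => (Z j, y j)) (i + 1)) (Z (i + 1))).1 ∧
          (τ (hist (fun j => (Z j, y j)) i) (Z i)).2 <
            (τ (hist (fun j => (Z j, y j)) (i + 1)) (Z (i + 1))).2) ∧
        prefCat pre
          (interleave (fun i => (τ (hist (fun j => (Z j, y j)) i) (Z i)).1) y) ∈ A

/-- Player I has a strategy in the relational game `B_X(pre)` to play in `A`
(case of an odd-length prefix): I opens with an integer `t0`; II plays nonzero vectors
`y i ∈ X` with `n i < y i`, forming a block sequence, together with block subspaces
`Z i ≤ X`; I answers with a nonzero vector `x i ∈ Z i` (I's vectors forming a block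
sequence) and the next integer `n (i+1)`, the integers being strictly increasing.  The
outcome is `pre` followed by `y 0, x 0, y 1, x 1, …`. -/
def IWinsBOdd (b : Module.Basis ℕ 𝔽 E) (X : Submodule 𝔽 E) (pre : List E)
    (A : Set (ℕ → E)) : Prop :=
  ∃ (t0 : ℕ) (τ : List (E × Submodule 𝔽 E) → E × ℕ),
    ∀ q : ℕ → E × Submodule 𝔽 E,
      (∀ i, (q i).1 ∈ X ∧ (q i).1 ≠ 0 ∧ NatLt b (natsA t0 τ q i) (q i).1 ∧
          VecLt b (q i).1 (q (i + 1)).1 ∧ IsBlockSubspace b (q i).2 ∧ (q i).2 ≤ X) →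
      (∀ i, (τ (hist q (i + 1))).1 ∈ (q i).2 ∧ (τ (hist q (i + 1))).1 ≠ 0 ∧
          VecLt b (τ (hist q (i + 1))).1 (τ (hist q (i + 2))).1 ∧
          natsA t0 τ q i < natsA t0 τ q (i + 1)) ∧
        prefCat pre
          (interleave (fun i => (q i).1) (fun i => (τ (hist q (i + 1))).1)) ∈ A

/-- Player I has a strategy in the relational game `B_X(pre)` to play in `A`. -/
def IWinsB (b : Module.Basis ℕ 𝔽 E) (X : Submodule 𝔽 E) (pre : List E)
    (A : Set (ℕ → E)) : Prop :=
  if pre.length % 2 = 0 then IWinsBEven b X pre A else IWinsBOdd b X pre A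

end Defs

section Aux

open Function Submodule Set

variable {𝔽 : Type} [Field 𝔽] {E : Type} [AddCommGroup E] [Module 𝔽 E]
variable (b : Module.Basis ℕ 𝔽 E)

/-- Max of the support. -/
noncomputable def bnd (x : E) : Finset ℕ := supp b x

lemma supp_eq_empty_iff {x : E} : supp b x = ∅ ↔ x = 0 := by
  unfold supp
  rw [Finsupp.support_eq_empty, ← map_zero b.repr]
  exact ⟨fun h => b.repr.injective h, fun h => by rw [h]⟩

lemma supp_nonempty {x : E} (hx : x ≠ 0) : (supp b x).Nonempty := by
  rw [Finset.nonempty_iff_ne_empty]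
  intro h; exact hx ((supp_eq_empty_iff b).1 h)

lemma natLt_mono {m n : ℕ} {x : E} (h : NatLt b n x) (hm : m ≤ n) : NatLt b m x :=
  fun k hk => lt_of_le_of_lt hm (h k hk)

lemma vecLt_of_natLt {x y : E} {N : ℕ} (h1 : ∀ k ∈ supp b x, k ≤ N) (h2 : NatLt b N y) :
    VecLt b x y :=
  fun m hm n hn => lt_of_le_of_lt (h1 m hm) (h2 n hn)

lemma vecLt_trans' {x y z : E} (h1 : VecLt b x y) (h2 : VecLt b y z) (hy : y ≠ 0) :
    VecLt b x z := by
  obtain ⟨k, hk⟩ := supp_nonempty b hy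
  exact fun m hm n hn => lt_trans (h1 m hm k hk) (h2 k hk n hn)

lemma IsBlockSeq.vecLt_of_lt {w : ℕ → E} (hw : IsBlockSeq b w) {i j : ℕ} (hij : i < j) :
    VecLt b (w i) (w j) := by
  induction j with
  | zero => omega
  | succ j ih =>
    rcases Nat.lt_succ_iff_lt_or_eq.1 hij with h | h
    · exact vecLt_trans' b (ih h) (hw.2 j) (hw.1 j)
    · rw [h]; exact hw.2 j

lemma IsBlockSeq.disjoint_supp {w : ℕ → E} (hw : IsBlockSeq b w) {i j : ℕ} (hij : i ≠ j) :
    Disjoint (supp b (w i)) (supp b (w j)) := by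
  wlog h : i < j generalizing i j
  · exact (this hij.symm (by omega)).symm
  · rw [Finset.disjoint_left]
    intro k hk1 hk2
    exact lt_irrefl k (hw.vecLt_of_lt b h k hk1 k hk2)

lemma IsBlockSeq.min_ge {w : ℕ → E} (hw : IsBlockSeq b w) :
    ∀ n, ∀ k ∈ supp b (w n), n ≤ k := by
  intro n
  induction n with
  | zero => exact fun k _ => Nat.zero_le k
  | succ n ih =>
    intro k hk
    obtain ⟨k', hk'⟩ := supp_nonempty b (hw.1 n)
    exact Nat.succ_le_of_lt (lt_of_le_of_lt (ih k' hk') (hw.2 n k' hk' k hk))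

lemma IsBlockSeq.natLt_succ {w : ℕ → E} (hw : IsBlockSeq b w) (N : ℕ) :
    NatLt b N (w (N + 1)) :=
  fun k hk => lt_of_lt_of_le (Nat.lt_succ_self N) (hw.min_ge b (N+1) k hk)

lemma IsBlockSeq.shift {w : ℕ → E} (hw : IsBlockSeq b w) (k : ℕ) :
    IsBlockSeq b (fun i => w (i + k)) :=
  ⟨fun n => hw.1 (n + k), fun n => by simpa [Nat.succ_add, Nat.add_right_comm] using hw.2 (n + k)⟩

/-- Support of a linear combination of a block sequence. -/
lemma supp_finsuppSum {w : ℕ → E} (hw : IsBlockSeq b w) (c : ℕ →₀ 𝔽) :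
    supp b (c.sum fun i a => a • w i) = c.support.biUnion fun i => supp b (w i) := by
  classical
  unfold supp
  rw [Finsupp.sum, map_sum]
  have hds : ∀ i₁ i₂ : ℕ, i₁ ≠ i₂ →
      Disjoint (b.repr (c i₁ • w i₁)).support (b.repr (c i₂ • w i₂)).support := by
    intro i j hij
    have h1 : (b.repr (c i • w i)).support ⊆ supp b (w i) := by
      rw [map_smul]; exact Finsupp.support_smul
    have h2 : (b.repr (c j • w j)).support ⊆ supp b (w j) := by
      rw [map_smul]; exact Finsupp.support_smul
    exact Finset.disjoint_of_subset_left h1 (Finset.disjoint_of_subset_right h2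
      (hw.disjoint_supp b hij))
  rw [Finsupp.support_sum_eq_biUnion _ (fun i j h => hds i j h)]
  apply Finset.biUnion_congr rfl
  intro i hi
  rw [map_smul, Finsupp.support_smul_eq (Finsupp.mem_support_iff.1 hi)]

lemma mem_span_repr {w : ℕ → E} {v : E} (hv : v ∈ span 𝔽 (Set.range w)) :
    ∃ c : ℕ →₀ 𝔽, (c.sum fun i a => a • w i) = v :=
  Finsupp.mem_span_range_iff_exists_finsupp.1 hv

/-- Nonzero elements of the span of a tail of a block sequence sit above `N` when all the
tail vectors do. -/
lemma natLt_of_mem_span {w : ℕ → E} (hw : IsBlockSeq b w) {v : E} (hv : v ∈ span 𝔽 (Set.range w))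
    {N : ℕ} (hN : ∀ i, NatLt b N (w i)) : NatLt b N v := by
  obtain ⟨c, hc⟩ := mem_span_repr hv
  intro k hk
  rw [← hc, supp_finsuppSum b hw] at hk
  obtain ⟨i, _, hki⟩ := Finset.mem_biUnion.1 hk
  exact hN i k hki

/-- A nonzero vector of the span whose support avoids `[0, N]` lies in the span of the tail. -/
lemma mem_span_shift {w : ℕ → E} (hw : IsBlockSeq b w) {v : E} (hv : v ∈ span 𝔽 (Set.range w))
    {k N : ℕ} (hbd : ∀ i < k, ∀ m ∈ supp b (w i), m ≤ N) (hvN : NatLt b N v) :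
    v ∈ span 𝔽 (Set.range fun i => w (i + k)) := by
  obtain ⟨c, hc⟩ := mem_span_repr hv
  have hzero : ∀ i ∈ c.support, k ≤ i := by
    intro i hi
    by_contra h
    obtain ⟨m, hm⟩ := supp_nonempty b (hw.1 i)
    have hmv : m ∈ supp b v := by
      rw [← hc, supp_finsuppSum b hw]
      exact Finset.mem_biUnion.2 ⟨i, hi, hm⟩
    exact absurd (hvN m hmv) (not_lt.2 (hbd i (by omega) m hm))
  rw [← hc, Finsupp.sum]
  apply Submodule.sum_mem
  intro i hi
  apply Submodule.smul_mem
  apply Submodule.subset_span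
  exact ⟨i - k, by simp only []; rw [Nat.sub_add_cancel (hzero i hi)]⟩

lemma isBlockSubspace_span_shift {w : ℕ → E} (hw : IsBlockSeq b w) (k : ℕ) :
    IsBlockSubspace b (span 𝔽 (Set.range fun i => w (i + k))) :=
  ⟨fun i => w (i + k), hw.shift b k, rfl⟩

lemma IsBlockSubspace.exists_above {X : Submodule 𝔽 E} (hX : IsBlockSubspace b X) (N : ℕ) :
    ∃ v, v ∈ X ∧ v ≠ 0 ∧ NatLt b N v := by
  obtain ⟨w, hw, rfl⟩ := hX
  exact ⟨w (N + 1), Submodule.subset_span ⟨N + 1, rfl⟩, hw.1 (N + 1), hw.natLt_succ b N⟩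

lemma IsBlockSubspace.exists_tail {X : Submodule 𝔽 E} (hX : IsBlockSubspace b X) (N : ℕ) :
    ∃ Z : Submodule 𝔽 E, IsBlockSubspace b Z ∧ Z ≤ X ∧ ∀ v ∈ Z, v ≠ 0 → NatLt b N v := by
  obtain ⟨w, hw, rfl⟩ := hX
  refine ⟨span 𝔽 (Set.range fun i => w (i + (N + 1))), isBlockSubspace_span_shift b hw (N+1),
    span_mono ?_, ?_⟩
  · rintro _ ⟨i, rfl⟩; exact ⟨i + (N + 1), rfl⟩
  · intro v hv _
    refine natLt_of_mem_span b (hw.shift b (N+1)) hv ?_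
    intro i m hm
    have := hw.min_ge b (i + (N + 1)) m hm
    omega

/-- The tail of a block subspace above `N`, as a function. -/
noncomputable def tailSub (X : Submodule 𝔽 E) (N : ℕ) : Submodule 𝔽 E :=
  letI := Classical.propDecidable
  if h : IsBlockSubspace b X then (h.exists_tail b N).choose else X

lemma tailSub_spec {X : Submodule 𝔽 E} (hX : IsBlockSubspace b X) (N : ℕ) :
    IsBlockSubspace b (tailSub b X N) ∧ tailSub b X N ≤ X ∧
      ∀ v ∈ tailSub b X N, v ≠ 0 → NatLt b N v := by
  unfold tailSub
  simp only [dif_pos hX]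
  exact (hX.exists_tail b N).choose_spec

lemma isBlockSubspace_top : IsBlockSubspace b (⊤ : Submodule 𝔽 E) := by
  refine ⟨fun n => b n, ⟨fun n => b.ne_zero n, fun n => ?_⟩, ?_⟩
  · intro m hm k hk
    unfold supp at hm hk
    rw [Module.Basis.repr_self, Finsupp.support_single_ne_zero _ one_ne_zero] at hm hk
    simp only [Finset.mem_singleton] at hm hk
    omega
  · rw [Module.Basis.span_eq]

end Aux
section Aux2

open Function Submodule Set

variable {α : Type _}

lemma hist_zero (p : ℕ → α) : hist p 0 = [] := rfl

lemma hist_succ (p : ℕ → α) (n : ℕ) : hist p (n + 1) = hist p n ++ [p n] := by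
  unfold hist
  rw [List.ofFn_succ']
  simp [List.concat_eq_append]

lemma hist_length (p : ℕ → α) (n : ℕ) : (hist p n).length = n := by
  simp [hist]

lemma prefCat_lt (l : List α) (f : ℕ → α) {n : ℕ} (h : n < l.length) :
    prefCat l f n = l.get ⟨n, h⟩ := by
  simp [prefCat, h]

lemma prefCat_ge (l : List α) (f : ℕ → α) {n : ℕ} (h : l.length ≤ n) :
    prefCat l f n = f (n - l.length) := by
  simp [prefCat, Nat.not_lt.2 h]

lemma prefCat_nil (f : ℕ → α) : prefCat [] f = f := by
  funext n; simp [prefCat]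

lemma interleave_even (x y : ℕ → α) (i : ℕ) : interleave x y (2 * i) = x i := by
  simp [interleave, Nat.mul_div_cancel_left, Nat.mul_mod_right]

lemma interleave_odd (x y : ℕ → α) (i : ℕ) : interleave x y (2 * i + 1) = y i := by
  have h1 : (2 * i + 1) % 2 = 1 := by omega
  have h2 : (2 * i + 1) / 2 = i := by omega
  simp [interleave, h1, h2]

lemma interleave_shift (x y : ℕ → α) (k : ℕ) :
    interleave (fun i => x (i + k)) (fun i => y (i + k)) =
      fun n => interleave x y (n + 2 * k) := by
  funext n
  have h1 : (n + 2 * k) % 2 = n % 2 := by omega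
  have h2 : (n + 2 * k) / 2 = n / 2 + k := by omega
  by_cases h : n % 2 = 0 <;> simp [interleave, h, h1, h2]

/-- The list of the first `k` rounds of the interleaving. -/
def ivl (x y : ℕ → α) : ℕ → List α
  | 0 => []
  | k + 1 => ivl x y k ++ [x k, y k]

lemma ivl_length (x y : ℕ → α) (k : ℕ) : (ivl x y k).length = 2 * k := by
  induction k with
  | zero => rfl
  | succ k ih => simp [ivl, ih]; omega

lemma splice1 (u : List α) (x y : ℕ → α) :
    prefCat u (interleave x y) =
      prefCat (u ++ [x 0, y 0]) (interleave (fun i => x (i + 1)) (fun i => y (i + 1))) := by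
  funext n
  rcases lt_or_ge n u.length with h | h
  · rw [prefCat_lt _ _ h, prefCat_lt _ _ (by simp; omega)]
    simp only [List.get_eq_getElem]; exact (List.getElem_append_left h).symm
  · rw [prefCat_ge _ _ h]
    rcases Nat.lt_or_ge n (u.length + 2) with h2 | h2
    · have hl : n < (u ++ [x 0, y 0]).length := by simp; omega
      rw [prefCat_lt _ _ hl]
      rcases (by omega : n = u.length ∨ n = u.length + 1) with rfl | he
      · have : (u ++ [x 0, y 0]).get ⟨u.length, hl⟩ = x 0 := by
          simp [List.getElem_append_right]
        rw [this]
        have : u.length - u.length = 2 * 0 := by omega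
        rw [this, interleave_even]
      · subst he
        have : (u ++ [x 0, y 0]).get ⟨u.length + 1, hl⟩ = y 0 := by
          simp [List.getElem_append_right]
        rw [this]
        have : u.length + 1 - u.length = 2 * 0 + 1 := by omega
        rw [this, interleave_odd]
    · rw [prefCat_ge _ _ (by simp; omega)]
      rw [interleave_shift]
      simp only []
      congr 1
      simp
      omega

lemma spliceK (u : List α) (x y : ℕ → α) (k : ℕ) :
    prefCat u (interleave x y) =
      prefCat (u ++ ivl x y k) (interleave (fun i => x (i + k)) (fun i => y (i + k))) := by
  induction k with
  | zero => simp [ivl]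
  | succ k ih =>
    rw [ih, splice1]
    have h1 : u ++ ivl x y k ++ [x (0 + k), y (0 + k)] = u ++ ivl x y (k + 1) := by
      simp [ivl]
    rw [h1]
    have h2 : (fun i => x (i + 1 + k)) = fun i => x (i + (k + 1)) := by
      funext i; congr 1; omega
    have h3 : (fun i => y (i + 1 + k)) = fun i => y (i + (k + 1)) := by
      funext i; congr 1; omega
    rw [h2, h3]

lemma prefCat_agree (l : List α) (f : ℕ → α) {j : ℕ} (h : j < l.length) (g : ℕ → α) :
    prefCat l f j = prefCat l g j := by
  rw [prefCat_lt _ _ h, prefCat_lt _ _ h]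

end Aux2

section Topo

variable {E : Type} [TopologicalSpace E] [DiscreteTopology E]

lemma mem_closure_of_agree {A : Set (ℕ → E)} {f : ℕ → E}
    (h : ∀ k : ℕ, ∃ g ∈ A, ∀ j < k, g j = f j) : f ∈ closure A := by
  rw [mem_closure_iff]
  intro o ho hf
  obtain ⟨I, u, hIu, hpi⟩ := isOpen_pi_iff.1 ho f hf
  obtain ⟨g, hgA, hg⟩ := h (I.sup id + 1)
  refine ⟨g, hpi ?_, hgA⟩
  intro a ha
  rw [hg a (by have := Finset.le_sup (f := id) ha; simp at this; omega)]
  exact (hIu a ha).2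

end Topo
section MasterB

open Function Submodule Set Classical

variable {𝔽 : Type} [Field 𝔽] {E : Type} [AddCommGroup E] [Module 𝔽 E]
variable (b : Module.Basis ℕ 𝔽 E)

lemma submodule_le_of_mem {V Z : Submodule 𝔽 E} (h : ∀ v ∈ Z, v ≠ 0 → v ∈ V) : Z ≤ V := by
  intro v hv
  by_cases h0 : v = 0
  · rw [h0]; exact V.zero_mem
  · exact h v hv h0

/-- The body of `IWinsBEven` for a fixed strategy `τ`. -/
def BBody (X : Submodule 𝔽 E) (pre : List E) (A : Set (ℕ → E))
    (τ : List (Submodule 𝔽 E × E) → Submodule 𝔽 E → E × ℕ) : Prop :=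
  ∀ (Z : ℕ → Submodule 𝔽 E) (y : ℕ → E),
    (∀ i, IsBlockSubspace b (Z i) ∧ Z i ≤ X ∧ y i ∈ X ∧ y i ≠ 0 ∧
        NatLt b (τ (hist (fun j => (Z j, y j)) i) (Z i)).2 (y i) ∧
        VecLt b (y i) (y (i + 1))) →
    (∀ i, (τ (hist (fun j => (Z j, y j)) i) (Z i)).1 ∈ Z i ∧
        (τ (hist (fun j => (Z j, y j)) i) (Z i)).1 ≠ 0 ∧
        VecLt b (τ (hist (fun j => (Z j, y j)) i) (Z i)).1
          (τ (hist (fun j => (Z j, y j)) (i + 1)) (Z (i + 1))).1 ∧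
        (τ (hist (fun j => (Z j, y j)) i) (Z i)).2 <
          (τ (hist (fun j => (Z j, y j)) (i + 1)) (Z (i + 1))).2) ∧
      prefCat pre (interleave (fun i => (τ (hist (fun j => (Z j, y j)) i) (Z i)).1) y) ∈ A

lemma iWinsBEven_iff (X : Submodule 𝔽 E) (pre : List E) (A : Set (ℕ → E)) :
    IWinsBEven b X pre A ↔ ∃ τ, BBody b X pre A τ := Iff.rfl

/-- Switch data for the game `B`: a winning strategy below `X` in a subspace `V` that
contains the tail of `X` above `N`. -/
def SwitchB (X : Submodule 𝔽 E) (C : Set (ℕ → E)) (u : List E) : Prop :=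
  ∃ (N : ℕ) (τ : List (Submodule 𝔽 E × E) → Submodule 𝔽 E → E × ℕ) (V : Submodule 𝔽 E),
    IsBlockSubspace b V ∧ (∀ v ∈ X, v ≠ 0 → NatLt b N v → v ∈ V) ∧ BBody b V u C τ

/-- State of the master strategy for game `B`. -/
def BSt (𝔽 E : Type) [Field 𝔽] [AddCommGroup E] [Module 𝔽 E] : Type :=
  List E × ℕ × Option (ℕ × (List (Submodule 𝔽 E × E) → Submodule 𝔽 E → E × ℕ)
    × List (Submodule 𝔽 E × E))

/-- One step of the master strategy for game `B`. -/
noncomputable def bStep (sel : List E → ℕ → Submodule 𝔽 E → E × ℕ)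
    (swP : List E → Prop)
    (swd : List E → ℕ × (List (Submodule 𝔽 E × E) → Submodule 𝔽 E → E × ℕ)) :
    BSt 𝔽 E → Submodule 𝔽 E × E → BSt 𝔽 E := fun st zy =>
  match st with
  | (pos, bd, none) =>
    let xm := sel pos bd zy.1
    let pos' := pos ++ [xm.1, zy.2]
    let bd' := max xm.2 ((supp b zy.2).sup id) + 1
    if swP pos' then (pos', bd', some (max (swd pos').1 bd', (swd pos').2, []))
    else (pos', bd', none)
  | (pos, bd, some d) =>
    (pos ++ [(d.2.1 d.2.2 (tailSub b zy.1 d.1)).1, zy.2], bd,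
      some (d.1, d.2.1, d.2.2 ++ [(tailSub b zy.1 d.1, zy.2)]))

/-- Output of the master strategy for game `B`. -/
noncomputable def bOut (sel : List E → ℕ → Submodule 𝔽 E → E × ℕ) :
    BSt 𝔽 E → Submodule 𝔽 E → E × ℕ := fun st Z =>
  match st with
  | (pos, bd, none) => sel pos bd Z
  | (_, _, some d) =>
    ((d.2.1 d.2.2 (tailSub b Z d.1)).1, (d.2.1 d.2.2 (tailSub b Z d.1)).2 + d.1 + 1)

lemma bStep_none (sel swP swd) (pos : List E) (bd : ℕ) (Z1 : Submodule 𝔽 E) (y1 : E) :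
    bStep b sel swP swd (pos, bd, none) (Z1, y1) =
      (if swP (pos ++ [(sel pos bd Z1).1, y1]) then
        (pos ++ [(sel pos bd Z1).1, y1], max (sel pos bd Z1).2 ((supp b y1).sup id) + 1,
          some (max (swd (pos ++ [(sel pos bd Z1).1, y1])).1
              (max (sel pos bd Z1).2 ((supp b y1).sup id) + 1),
            (swd (pos ++ [(sel pos bd Z1).1, y1])).2, []))
      else (pos ++ [(sel pos bd Z1).1, y1], max (sel pos bd Z1).2 ((supp b y1).sup id) + 1,
          none)) := rfl

lemma bStep_some (sel swP swd) (pos : List E) (bd : ℕ) (d) (Z1 : Submodule 𝔽 E) (y1 : E) :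
    bStep b sel swP swd (pos, bd, some d) (Z1, y1) =
      (pos ++ [(d.2.1 d.2.2 (tailSub b Z1 d.1)).1, y1], bd,
        some (d.1, d.2.1, d.2.2 ++ [(tailSub b Z1 d.1, y1)])) := rfl

lemma bOut_none (sel) (pos : List E) (bd : ℕ) (Z : Submodule 𝔽 E) :
    bOut b sel (pos, bd, none) Z = sel pos bd Z := rfl

lemma bOut_some (sel) (pos : List E) (bd : ℕ) (d) (Z : Submodule 𝔽 E) :
    bOut b sel (pos, bd, some d) Z =
      ((d.2.1 d.2.2 (tailSub b Z d.1)).1, (d.2.1 d.2.2 (tailSub b Z d.1)).2 + d.1 + 1) := rfl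

end MasterB
section MasterB2

open Function Submodule Set Classical

variable {𝔽 : Type} [Field 𝔽] {E : Type} [AddCommGroup E] [Module 𝔽 E]
variable (b : Module.Basis ℕ 𝔽 E)

lemma masterB (X : Submodule 𝔽 E) (C : Set (ℕ → E)) (P : List E → ℕ → Prop)
    (s0 : List E) (b0 : ℕ) (hP0 : P s0 b0)
    (hstep : ∀ s n, P s n → ∀ Z : Submodule 𝔽 E, IsBlockSubspace b Z → Z ≤ X →
      ∃ x m, x ∈ Z ∧ x ≠ 0 ∧ NatLt b n x ∧ n < m ∧ (∀ k ∈ supp b x, k < m) ∧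
        ∀ y : E, y ∈ X → y ≠ 0 → NatLt b m y →
          P (s ++ [x, y]) (max m ((supp b y).sup id) + 1) ∨ SwitchB b X C (s ++ [x, y]))
    (hout : ∀ x y : ℕ → E, (∀ i, ∃ c, P (s0 ++ ivl x y i) c) →
      prefCat s0 (interleave x y) ∈ C) :
    IWinsBEven b X s0 C := by
  classical
  have hsel' : ∀ (s : List E) (n : ℕ) (Z : Submodule 𝔽 E), ∃ xm : E × ℕ,
      P s n → IsBlockSubspace b Z → Z ≤ X →
        xm.1 ∈ Z ∧ xm.1 ≠ 0 ∧ NatLt b n xm.1 ∧ n < xm.2 ∧ (∀ k ∈ supp b xm.1, k < xm.2) ∧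
        ∀ y : E, y ∈ X → y ≠ 0 → NatLt b xm.2 y →
          P (s ++ [xm.1, y]) (max xm.2 ((supp b y).sup id) + 1) ∨
            SwitchB b X C (s ++ [xm.1, y]) := by
    intro s n Z
    by_cases h : P s n ∧ IsBlockSubspace b Z ∧ Z ≤ X
    · obtain ⟨x, m, hx⟩ := hstep s n h.1 Z h.2.1 h.2.2
      exact ⟨(x, m), fun _ _ _ => hx⟩
    · exact ⟨(0, 0), fun h1 h2 h3 => absurd ⟨h1, h2, h3⟩ h⟩
  choose sel hsel using hsel'
  have hswd' : ∀ u : List E,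
      ∃ d : ℕ × (List (Submodule 𝔽 E × E) → Submodule 𝔽 E → E × ℕ),
        SwitchB b X C u → ∃ V : Submodule 𝔽 E, IsBlockSubspace b V ∧
          (∀ v ∈ X, v ≠ 0 → NatLt b d.1 v → v ∈ V) ∧ BBody b V u C d.2 := by
    intro u
    by_cases h : SwitchB b X C u
    · obtain ⟨N, τ, V, h1, h2, h3⟩ := h
      exact ⟨(N, τ), fun _ => ⟨V, h1, h2, h3⟩⟩
    · exact ⟨(0, fun _ _ => (0, 0)), fun hc => absurd hc h⟩
  choose swd hswd using hswd'
  refine ⟨fun h Z => bOut b sel (h.foldl (bStep b sel (SwitchB b X C) swd) (s0, b0, none)) Z,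
    ?_⟩
  intro Z y hZy
  set st : ℕ → BSt 𝔽 E :=
    fun i => (hist (fun j => (Z j, y j)) i).foldl (bStep b sel (SwitchB b X C) swd)
      (s0, b0, none) with hstdef
  set xs : ℕ → E := fun i => (bOut b sel (st i) (Z i)).1 with hxs
  set ns : ℕ → ℕ := fun i => (bOut b sel (st i) (Z i)).2 with hns
  have hst0 : st 0 = (s0, b0, none) := rfl
  have hstS : ∀ i, st (i + 1) = bStep b sel (SwitchB b X C) swd (st i) (Z i, y i) := by
    intro i
    rw [hstdef]
    simp only
    rw [hist_succ]; refine (List.foldl_append ..).trans ?_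
    rfl
  have hR : ∀ i, IsBlockSubspace b (Z i) ∧ Z i ≤ X ∧ y i ∈ X ∧ y i ≠ 0 ∧
      NatLt b (ns i) (y i) ∧ VecLt b (y i) (y (i + 1)) := hZy
  suffices hsuff : (∀ i, xs i ∈ Z i ∧ xs i ≠ 0 ∧ VecLt b (xs i) (xs (i + 1)) ∧
      ns i < ns (i + 1)) ∧ prefCat s0 (interleave xs y) ∈ C by exact hsuff
  by_cases hnever : ∀ i, (st i).2.2 = none
  · -- never switch
    have hJ : ∀ i, (st i).1 = s0 ++ ivl xs y i ∧ P (st i).1 (st i).2.1 ∧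
        (∀ i', i = i' + 1 → ns i' < (st i).2.1 ∧ ∀ t ∈ supp b (xs i'), t < (st i).2.1) := by
      intro i
      induction i with
      | zero =>
        refine ⟨by rw [hst0]; simp [ivl], by rw [hst0]; exact hP0,
          fun i' h => absurd h (by omega)⟩
      | succ i ih =>
        have hmd : st i = ((st i).1, (st i).2.1, none) := by rw [← hnever i]; rfl

        have hsi := hsel (st i).1 (st i).2.1 (Z i) ih.2.1 (hR i).1 (hR i).2.1
        have hid : bOut b sel (st i) (Z i) = sel (st i).1 (st i).2.1 (Z i) := by
          rw [hmd]; rfl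
        have hxsi : xs i = (sel (st i).1 (st i).2.1 (Z i)).1 := by
          rw [hxs]; simp only; rw [hid]
        have hnsi : ns i = (sel (st i).1 (st i).2.1 (Z i)).2 := by
          rw [hns]; simp only; rw [hid]
        have hyok := hsi.2.2.2.2.2 (y i) (hR i).2.2.1 (hR i).2.2.2.1
          (by rw [← hnsi]; exact (hR i).2.2.2.2.1)
        have hswF : ¬ SwitchB b X C ((st i).1 ++ [(sel (st i).1 (st i).2.1 (Z i)).1, y i]) := by
          intro hsw
          have hc := hnever (i + 1)
          rw [hstS i, hmd, bStep_none, if_pos hsw] at hc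
          exact Option.some_ne_none _ hc
        have hst1 : st (i + 1) = ((st i).1 ++ [(sel (st i).1 (st i).2.1 (Z i)).1, y i],
            max (sel (st i).1 (st i).2.1 (Z i)).2 ((supp b (y i)).sup id) + 1, none) := by
          rw [hstS i, hmd, bStep_none, if_neg hswF]
        have hPnew := hyok.resolve_right hswF
        refine ⟨?_, ?_, ?_⟩
        · rw [hst1]
          show (st i).1 ++ [(sel (st i).1 (st i).2.1 (Z i)).1, y i] = _
          rw [← hxsi, ih.1]
          show _ = s0 ++ ivl xs y (i + 1)
          rw [show ivl xs y (i+1) = ivl xs y i ++ [xs i, y i] from rfl, ← List.append_assoc]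
        · rw [hst1]
          show P ((st i).1 ++ [(sel (st i).1 (st i).2.1 (Z i)).1, y i]) _
          exact hPnew
        · intro i' hi'
          have : i' = i := by omega
          subst this
          rw [hst1]
          constructor
          · show ns i' < max (sel (st i').1 (st i').2.1 (Z i')).2 ((supp b (y i')).sup id) + 1
            rw [hnsi]
            have := le_max_left (sel (st i').1 (st i').2.1 (Z i')).2 ((supp b (y i')).sup id)
            omega
          · intro t ht
            show t < max (sel (st i').1 (st i').2.1 (Z i')).2 ((supp b (y i')).sup id) + 1
            have := hsi.2.2.2.2.1 t (by rw [← hxsi]; exact ht)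
            have := le_max_left (sel (st i').1 (st i').2.1 (Z i')).2 ((supp b (y i')).sup id)
            omega
    have hid : ∀ i, bOut b sel (st i) (Z i) = sel (st i).1 (st i).2.1 (Z i) := by
      intro i
      have hmd : st i = ((st i).1, (st i).2.1, none) := by rw [← hnever i]; rfl

      rw [hmd]; rfl
    have hxsi : ∀ i, xs i = (sel (st i).1 (st i).2.1 (Z i)).1 := by
      intro i; rw [hxs]; simp only; rw [hid]
    have hnsi : ∀ i, ns i = (sel (st i).1 (st i).2.1 (Z i)).2 := by
      intro i; rw [hns]; simp only; rw [hid]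
    have hfact : ∀ i, xs i ∈ Z i ∧ xs i ≠ 0 ∧ NatLt b (st i).2.1 (xs i) ∧
        (st i).2.1 < ns i ∧ ∀ t ∈ supp b (xs i), t < ns i := by
      intro i
      have hsi := hsel (st i).1 (st i).2.1 (Z i) (hJ i).2.1 (hR i).1 (hR i).2.1
      rw [hxsi i, hnsi i]
      exact ⟨hsi.1, hsi.2.1, hsi.2.2.1, hsi.2.2.2.1, hsi.2.2.2.2.1⟩
    refine ⟨fun i => ?_, ?_⟩
    · obtain ⟨h1, h2, h3, h4, h5⟩ := hfact i
      have hlast := (hJ (i + 1)).2.2 i rfl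
      refine ⟨h1, h2, ?_, ?_⟩
      · exact vecLt_of_natLt b (fun t ht => le_of_lt (hlast.2 t ht)) (hfact (i + 1)).2.2.1
      · have := (hfact (i + 1)).2.2.2.1
        have := hlast.1
        omega
    · exact hout xs y (fun i => ⟨(st i).2.1, by rw [← (hJ i).1]; exact (hJ i).2.1⟩)
  · -- a switch happens
    push_neg at hnever
    have hex : ∃ i, (st i).2.2 ≠ none := hnever
    obtain ⟨k, hk, hlt⟩ : ∃ k, (st k).2.2 ≠ none ∧ ∀ i < k, (st i).2.2 = none :=
      ⟨Nat.find hex, Nat.find_spec hex, fun i hi => not_not.1 (Nat.find_min hex hi)⟩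
    obtain ⟨k', rfl⟩ : ∃ k', k = k' + 1 := by
      rcases Nat.eq_zero_or_pos k with h | h
      · exact absurd (by rw [h, hst0] : (st k).2.2 = none) hk
      · exact ⟨k - 1, by omega⟩
    -- run invariant up to k'
    have hJ : ∀ i, i ≤ k' → ((st i).1 = s0 ++ ivl xs y i ∧ P (st i).1 (st i).2.1 ∧
        (∀ i', i = i' + 1 → ns i' < (st i).2.1 ∧ ∀ t ∈ supp b (xs i'), t < (st i).2.1)) := by
      intro i
      induction i with
      | zero =>
        exact fun _ => ⟨by rw [hst0]; simp [ivl], by rw [hst0]; exact hP0,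
          fun i' h => absurd h (by omega)⟩
      | succ i ih =>
        intro hle
        have ihh := ih (by omega)
        have hmd : st i = ((st i).1, (st i).2.1, none) := by rw [← hlt i (by omega)]; rfl
        have hsi := hsel (st i).1 (st i).2.1 (Z i) ihh.2.1 (hR i).1 (hR i).2.1
        have hid : bOut b sel (st i) (Z i) = sel (st i).1 (st i).2.1 (Z i) := by
          rw [hmd]; rfl
        have hxsi : xs i = (sel (st i).1 (st i).2.1 (Z i)).1 := by
          rw [hxs]; simp only; rw [hid]
        have hnsi : ns i = (sel (st i).1 (st i).2.1 (Z i)).2 := by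
          rw [hns]; simp only; rw [hid]
        have hyok := hsi.2.2.2.2.2 (y i) (hR i).2.2.1 (hR i).2.2.2.1
          (by rw [← hnsi]; exact (hR i).2.2.2.2.1)
        have hswF : ¬ SwitchB b X C ((st i).1 ++ [(sel (st i).1 (st i).2.1 (Z i)).1, y i]) := by
          intro hsw
          have hc := hlt (i + 1) (by omega)
          rw [hstS i, hmd, bStep_none, if_pos hsw] at hc
          exact Option.some_ne_none _ hc
        have hst1 : st (i + 1) = ((st i).1 ++ [(sel (st i).1 (st i).2.1 (Z i)).1, y i],
            max (sel (st i).1 (st i).2.1 (Z i)).2 ((supp b (y i)).sup id) + 1, none) := by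
          rw [hstS i, hmd, bStep_none, if_neg hswF]
        have hPnew := hyok.resolve_right hswF
        refine ⟨?_, ?_, ?_⟩
        · rw [hst1]
          show (st i).1 ++ [(sel (st i).1 (st i).2.1 (Z i)).1, y i] = _
          rw [← hxsi, ihh.1]
          show _ = s0 ++ ivl xs y (i + 1)
          rw [show ivl xs y (i+1) = ivl xs y i ++ [xs i, y i] from rfl, ← List.append_assoc]
        · rw [hst1]
          show P ((st i).1 ++ [(sel (st i).1 (st i).2.1 (Z i)).1, y i]) _
          exact hPnew
        · intro i' hi'
          have : i' = i := by omega
          subst this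
          rw [hst1]
          constructor
          · show ns i' < max (sel (st i').1 (st i').2.1 (Z i')).2 ((supp b (y i')).sup id) + 1
            rw [hnsi]
            have := le_max_left (sel (st i').1 (st i').2.1 (Z i')).2 ((supp b (y i')).sup id)
            omega
          · intro t ht
            show t < max (sel (st i').1 (st i').2.1 (Z i')).2 ((supp b (y i')).sup id) + 1
            have := hsi.2.2.2.2.1 t (by rw [← hxsi]; exact ht)
            have := le_max_left (sel (st i').1 (st i').2.1 (Z i')).2 ((supp b (y i')).sup id)
            omega
    -- the seam
    have hJk' := hJ k' le_rfl
    have hmdk' : st k' = ((st k').1, (st k').2.1, none) := by rw [← hlt k' (by omega)]; rfl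
    have hsik' := hsel (st k').1 (st k').2.1 (Z k') hJk'.2.1 (hR k').1 (hR k').2.1
    have hidk' : bOut b sel (st k') (Z k') = sel (st k').1 (st k').2.1 (Z k') := by
      rw [hmdk']; rfl
    have hxsk' : xs k' = (sel (st k').1 (st k').2.1 (Z k')).1 := by
      rw [hxs]; simp only; rw [hidk']
    have hnsk' : ns k' = (sel (st k').1 (st k').2.1 (Z k')).2 := by
      rw [hns]; simp only; rw [hidk']
    have hSW : SwitchB b X C ((st k').1 ++ [(sel (st k').1 (st k').2.1 (Z k')).1, y k']) := by
      by_contra hsw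
      apply hk
      rw [hstS k', hmdk', bStep_none, if_neg hsw]
    set posk : List E := (st k').1 ++ [(sel (st k').1 (st k').2.1 (Z k')).1, y k']
      with hposkdef
    set bdk : ℕ := max (sel (st k').1 (st k').2.1 (Z k')).2 ((supp b (y k')).sup id) + 1
      with hbdkdef
    set N : ℕ := max (swd posk).1 bdk with hNdef
    set τ' := (swd posk).2 with hτ'def
    have hstk : st (k' + 1) = (posk, bdk, some (N, τ', [])) := by
      rw [hstS k', hmdk', bStep_none, if_pos hSW]
    obtain ⟨V, hVblk, hVtail, hVbody⟩ := hswd posk hSW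
    have hposid : posk = s0 ++ ivl xs y (k' + 1) := by
      rw [hposkdef, ← hxsk', hJk'.1]
      show _ = s0 ++ ivl xs y (k' + 1)
      rw [show ivl xs y (k'+1) = ivl xs y k' ++ [xs k', y k'] from rfl, ← List.append_assoc]
    have hNd1 : (swd posk).1 ≤ N := by rw [hNdef]; exact le_max_left _ _
    have hNd2 : bdk ≤ N := by rw [hNdef]; exact le_max_right _ _
    have hnsbd : ns k' < bdk := by
      rw [hnsk', hbdkdef]
      have := le_max_left (sel (st k').1 (st k').2.1 (Z k')).2 ((supp b (y k')).sup id)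
      omega
    -- switched invariant
    have hJ2 : ∀ t, st (k' + 1 + t) =
        (s0 ++ ivl xs y (k' + 1 + t), bdk,
          some (N, τ', hist (fun j => (tailSub b (Z (k' + 1 + j)) N, y (k' + 1 + j))) t)) := by
      intro t
      induction t with
      | zero =>
        rw [show k' + 1 + 0 = k' + 1 from rfl, hstk, hposid]
        rfl
      | succ t ih =>
        have hstep2 : st (k' + 1 + (t + 1)) =
            bStep b sel (SwitchB b X C) swd (st (k' + 1 + t))
              (Z (k' + 1 + t), y (k' + 1 + t)) := by
          rw [show k' + 1 + (t + 1) = (k' + 1 + t) + 1 from rfl]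
          exact hstS (k' + 1 + t)
        have hxidt : xs (k' + 1 + t) =
            (τ' (hist (fun j => (tailSub b (Z (k' + 1 + j)) N, y (k' + 1 + j))) t)
              (tailSub b (Z (k' + 1 + t)) N)).1 := by
          rw [hxs]; simp only; rw [ih]; rfl
        have hpos' : (s0 ++ ivl xs y (k' + 1 + t)) ++
            [(τ' (hist (fun j => (tailSub b (Z (k' + 1 + j)) N, y (k' + 1 + j))) t)
              (tailSub b (Z (k' + 1 + t)) N)).1, y (k' + 1 + t)] =
            s0 ++ ivl xs y (k' + 1 + (t + 1)) := by
          rw [← hxidt]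
          rw [show ivl xs y (k'+1+(t+1)) =
            ivl xs y (k'+1+t) ++ [xs (k'+1+t), y (k'+1+t)] from rfl, ← List.append_assoc]
        rw [hstep2, ih, bStep_some]
        simp only
        rw [hpos', hist_succ]
    have hxid : ∀ t, xs (k' + 1 + t) =
        (τ' (hist (fun j => (tailSub b (Z (k' + 1 + j)) N, y (k' + 1 + j))) t)
          (tailSub b (Z (k' + 1 + t)) N)).1 := by
      intro t; rw [hxs]; simp only; rw [hJ2 t]; rfl
    have hnid : ∀ t, ns (k' + 1 + t) =
        (τ' (hist (fun j => (tailSub b (Z (k' + 1 + j)) N, y (k' + 1 + j))) t)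
          (tailSub b (Z (k' + 1 + t)) N)).2 + N + 1 := by
      intro t; rw [hns]; simp only; rw [hJ2 t]; rfl
    -- simulated play
    have hts : ∀ t, IsBlockSubspace b (tailSub b (Z (k' + 1 + t)) N) ∧
        tailSub b (Z (k' + 1 + t)) N ≤ Z (k' + 1 + t) ∧
        ∀ v ∈ tailSub b (Z (k' + 1 + t)) N, v ≠ 0 → NatLt b N v :=
      fun t => tailSub_spec b (hR (k' + 1 + t)).1 N
    have hsim : ∀ t, IsBlockSubspace b (tailSub b (Z (k' + 1 + t)) N) ∧
        tailSub b (Z (k' + 1 + t)) N ≤ V ∧ y (k' + 1 + t) ∈ V ∧ y (k' + 1 + t) ≠ 0 ∧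
        NatLt b (τ' (hist (fun j => (tailSub b (Z (k' + 1 + j)) N, y (k' + 1 + j))) t)
          (tailSub b (Z (k' + 1 + t)) N)).2 (y (k' + 1 + t)) ∧
        VecLt b (y (k' + 1 + t)) (y (k' + 1 + (t + 1))) := by
      intro t
      have hrule := hR (k' + 1 + t)
      refine ⟨(hts t).1, ?_, ?_, hrule.2.2.2.1, ?_, ?_⟩
      · apply submodule_le_of_mem
        intro v hv hv0
        exact hVtail v (hrule.2.1 ((hts t).2.1 hv)) hv0
          (natLt_mono b ((hts t).2.2 v hv hv0) hNd1)
      · refine hVtail _ hrule.2.2.1 hrule.2.2.2.1 (natLt_mono b hrule.2.2.2.2.1 ?_)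
        rw [hnid t]; omega
      · refine natLt_mono b hrule.2.2.2.2.1 ?_
        rw [hnid t]; omega
      · exact hrule.2.2.2.2.2
    have hconc := hVbody (fun t => tailSub b (Z (k' + 1 + t)) N) (fun t => y (k' + 1 + t)) hsim
    have hleg' := hconc.1
    have hCout := hconc.2
    constructor
    · -- legality
      intro i
      rcases lt_trichotomy i k' with hik | heq | hik
      · -- both rounds in run phase
        have hJi := hJ i (by omega)
        have hJi1 := hJ (i + 1) (by omega)
        have hmd : st i = ((st i).1, (st i).2.1, none) := by rw [← hlt i (by omega)]; rfl
        have hmd1 : st (i + 1) = ((st (i + 1)).1, (st (i + 1)).2.1, none) := by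
          rw [← hlt (i + 1) (by omega)]; rfl
        have hid : bOut b sel (st i) (Z i) = sel (st i).1 (st i).2.1 (Z i) := by
          rw [hmd]; rfl
        have hid1 : bOut b sel (st (i + 1)) (Z (i + 1)) =
            sel (st (i + 1)).1 (st (i + 1)).2.1 (Z (i + 1)) := by
          rw [hmd1]; rfl
        have hxsi : xs i = (sel (st i).1 (st i).2.1 (Z i)).1 := by
          rw [hxs]; simp only; rw [hid]
        have hnsi : ns i = (sel (st i).1 (st i).2.1 (Z i)).2 := by
          rw [hns]; simp only; rw [hid]
        have hxsi1 : xs (i + 1) = (sel (st (i + 1)).1 (st (i + 1)).2.1 (Z (i + 1))).1 := by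
          rw [hxs]; simp only; rw [hid1]
        have hnsi1 : ns (i + 1) = (sel (st (i + 1)).1 (st (i + 1)).2.1 (Z (i + 1))).2 := by
          rw [hns]; simp only; rw [hid1]
        have hsi := hsel (st i).1 (st i).2.1 (Z i) hJi.2.1 (hR i).1 (hR i).2.1
        have hsi1 := hsel (st (i + 1)).1 (st (i + 1)).2.1 (Z (i + 1)) hJi1.2.1
          (hR (i + 1)).1 (hR (i + 1)).2.1
        have hlast := hJi1.2.2 i rfl
        refine ⟨by rw [hxsi]; exact hsi.1, by rw [hxsi]; exact hsi.2.1, ?_, ?_⟩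
        · refine vecLt_of_natLt b (fun t ht => le_of_lt (hlast.2 t ht)) ?_
          rw [hxsi1]; exact hsi1.2.2.1
        · have h1 := hlast.1
          have h2 := hsi1.2.2.2.1
          rw [← hnsi1] at h2
          omega
      · -- seam round
        rw [heq]
        have hlast0 := hsik'.2.2.2.2.1
        refine ⟨by rw [hxsk']; exact hsik'.1, by rw [hxsk']; exact hsik'.2.1, ?_, ?_⟩
        · have hx1 : xs (k' + 1) = xs (k' + 1 + 0) := by norm_num
          have hmem := (hleg' 0).1
          have hnz := (hleg' 0).2.1
          rw [← hxid 0] at hmem hnz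
          have hNlt : NatLt b N (xs (k' + 1 + 0)) := (hts 0).2.2 _ hmem hnz
          refine vecLt_of_natLt b (fun t ht => ?_) (by rw [hx1]; exact hNlt)
          have h1 := hlast0 t (by rw [← hxsk']; exact ht)
          rw [← hnsk'] at h1
          omega
        · have h1 : ns (k' + 1) = ns (k' + 1 + 0) := by norm_num
          rw [h1, hnid 0]
          omega
      · -- switched rounds
        obtain ⟨t, rfl⟩ : ∃ t, i = k' + 1 + t := ⟨i - (k' + 1), by omega⟩
        have hmem := (hleg' t).1
        have hnz := (hleg' t).2.1
        have hvl := (hleg' t).2.2.1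
        have hni := (hleg' t).2.2.2
        rw [← hxid t] at hmem hnz
        refine ⟨(hts t).2.1 hmem, hnz, ?_, ?_⟩
        · have e1 : k' + 1 + t + 1 = k' + 1 + (t + 1) := rfl
          rw [hxid t, e1, hxid (t + 1)]
          exact hvl
        · have e1 : k' + 1 + t + 1 = k' + 1 + (t + 1) := rfl
          rw [hnid t, e1, hnid (t + 1)]
          have : (τ' (hist (fun j => (tailSub b (Z (k' + 1 + j)) N, y (k' + 1 + j))) t)
              (tailSub b (Z (k' + 1 + t)) N)).2 <
              (τ' (hist (fun j => (tailSub b (Z (k' + 1 + j)) N, y (k' + 1 + j))) (t + 1))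
              (tailSub b (Z (k' + 1 + (t + 1))) N)).2 := hni
          omega
    · -- outcome
      have hfun : (fun t => (τ' (hist (fun j =>
          (tailSub b (Z (k' + 1 + j)) N, y (k' + 1 + j))) t)
            (tailSub b (Z (k' + 1 + t)) N)).1) = fun t => xs (k' + 1 + t) :=
        funext fun t => (hxid t).symm
      rw [hfun, hposid] at hCout
      rw [spliceK s0 xs y (k' + 1)]
      have e1 : (fun i => xs (i + (k' + 1))) = fun t => xs (k' + 1 + t) := by
        funext i; congr 1; omega
      have e2 : (fun i => y (i + (k' + 1))) = fun t => y (k' + 1 + t) := by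
        funext i; congr 1; omega
      rw [e1, e2]
      exact hCout

end MasterB2
section MasterA

open Function Submodule Set Classical

variable {𝔽 : Type} [Field 𝔽] {E : Type} [AddCommGroup E] [Module 𝔽 E]
variable (b : Module.Basis ℕ 𝔽 E)

/-- The body of `IIWinsAEven` for a fixed opening integer and strategy. -/
def ABody (X : Submodule 𝔽 E) (pre : List E) (A : Set (ℕ → E)) (n0 : ℕ)
    (σ : List (E × Submodule 𝔽 E) → E × ℕ) : Prop :=
  ∀ p : ℕ → E × Submodule 𝔽 E,
    (∀ i, (p i).1 ∈ X ∧ (p i).1 ≠ 0 ∧ NatLt b (natsA n0 σ p i) (p i).1 ∧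
        VecLt b (p i).1 (p (i + 1)).1 ∧ IsBlockSubspace b (p i).2 ∧ (p i).2 ≤ X) →
    (∀ i, (σ (hist p (i + 1))).1 ∈ (p i).2 ∧ (σ (hist p (i + 1))).1 ≠ 0 ∧
        VecLt b (σ (hist p (i + 1))).1 (σ (hist p (i + 2))).1 ∧
        natsA n0 σ p i < natsA n0 σ p (i + 1)) ∧
      prefCat pre (interleave (fun i => (p i).1) (fun i => (σ (hist p (i + 1))).1)) ∈ A

lemma iIWinsAEven_iff (X : Submodule 𝔽 E) (pre : List E) (A : Set (ℕ → E)) :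
    IIWinsAEven b X pre A ↔ ∃ n0 σ, ABody b X pre A n0 σ := Iff.rfl

/-- Switch data for game `A`. -/
def SwitchA (X : Submodule 𝔽 E) (C : Set (ℕ → E)) (u : List E) : Prop :=
  ∃ (N n0 : ℕ) (σ : List (E × Submodule 𝔽 E) → E × ℕ) (V : Submodule 𝔽 E),
    IsBlockSubspace b V ∧ (∀ v ∈ X, v ≠ 0 → NatLt b N v → v ∈ V) ∧ ABody b V u C n0 σ

/-- State of the master strategy for game `A`:
position, bound, last output, optional switch data `(N, n0', σ', simulated history)`. -/
def ASt (𝔽 E : Type) [Field 𝔽] [AddCommGroup E] [Module 𝔽 E] : Type :=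
  List E × ℕ × (E × ℕ) ×
    Option (ℕ × ℕ × (List (E × Submodule 𝔽 E) → E × ℕ) × List (E × Submodule 𝔽 E))

/-- One step of the master strategy for game `A`. -/
noncomputable def aStep (ann : List E → ℕ → ℕ) (ysel : List E → ℕ → E → Submodule 𝔽 E → E)
    (swP : List E → Prop) (swd : List E → ℕ × ℕ × (List (E × Submodule 𝔽 E) → E × ℕ)) :
    ASt 𝔽 E → E × Submodule 𝔽 E → ASt 𝔽 E := fun st xZ =>
  match st with
  | (s, c, _, none) =>
    let y := ysel s c xZ.1 xZ.2
    let s' := s ++ [xZ.1, y]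
    let c' := max (ann s c) ((supp b y).sup id) + 1
    if swP s' then
      (s', c', (y, (swd s').2.1 + max (swd s').1 c' + 1),
        some (max (swd s').1 c', (swd s').2.1, (swd s').2.2, []))
    else (s', c', (y, ann s' c'), none)
  | (s, c, _, some d) =>
    (s ++ [xZ.1, (d.2.2.1 (d.2.2.2 ++ [(xZ.1, tailSub b xZ.2 d.1)])).1], c,
      ((d.2.2.1 (d.2.2.2 ++ [(xZ.1, tailSub b xZ.2 d.1)])).1,
        (d.2.2.1 (d.2.2.2 ++ [(xZ.1, tailSub b xZ.2 d.1)])).2 + d.1 + 1),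
      some (d.1, d.2.1, d.2.2.1, d.2.2.2 ++ [(xZ.1, tailSub b xZ.2 d.1)]))

lemma aStep_none (ann ysel swP swd) (s : List E) (c : ℕ) (o : E × ℕ) (x : E)
    (Z : Submodule 𝔽 E) :
    aStep b ann ysel swP swd (s, c, o, none) (x, Z) =
      (if swP (s ++ [x, ysel s c x Z]) then
        (s ++ [x, ysel s c x Z], max (ann s c) ((supp b (ysel s c x Z)).sup id) + 1,
          (ysel s c x Z, (swd (s ++ [x, ysel s c x Z])).2.1 +
            max (swd (s ++ [x, ysel s c x Z])).1
              (max (ann s c) ((supp b (ysel s c x Z)).sup id) + 1) + 1),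
          some (max (swd (s ++ [x, ysel s c x Z])).1
              (max (ann s c) ((supp b (ysel s c x Z)).sup id) + 1),
            (swd (s ++ [x, ysel s c x Z])).2.1, (swd (s ++ [x, ysel s c x Z])).2.2, []))
      else
        (s ++ [x, ysel s c x Z], max (ann s c) ((supp b (ysel s c x Z)).sup id) + 1,
          (ysel s c x Z, ann (s ++ [x, ysel s c x Z])
            (max (ann s c) ((supp b (ysel s c x Z)).sup id) + 1)), none)) := rfl

lemma aStep_some (ann ysel swP swd) (s : List E) (c : ℕ) (o : E × ℕ) (d) (x : E)
    (Z : Submodule 𝔽 E) :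
    aStep b ann ysel swP swd (s, c, o, some d) (x, Z) =
      (s ++ [x, (d.2.2.1 (d.2.2.2 ++ [(x, tailSub b Z d.1)])).1], c,
        ((d.2.2.1 (d.2.2.2 ++ [(x, tailSub b Z d.1)])).1,
          (d.2.2.1 (d.2.2.2 ++ [(x, tailSub b Z d.1)])).2 + d.1 + 1),
        some (d.1, d.2.1, d.2.2.1, d.2.2.2 ++ [(x, tailSub b Z d.1)])) := rfl

end MasterA
section MasterA2

open Function Submodule Set Classical

variable {𝔽 : Type} [Field 𝔽] {E : Type} [AddCommGroup E] [Module 𝔽 E]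
variable (b : Module.Basis ℕ 𝔽 E)

lemma masterA (X : Submodule 𝔽 E) (C : Set (ℕ → E)) (P : List E → ℕ → Prop)
    (s0 : List E) (b0 : ℕ) (hP0 : P s0 b0)
    (hstep : ∀ s c, P s c → ∃ n', c < n' ∧ ∀ x : E, x ∈ X → x ≠ 0 → NatLt b n' x →
      ∀ Z : Submodule 𝔽 E, IsBlockSubspace b Z → Z ≤ X →
        ∃ y, y ∈ Z ∧ y ≠ 0 ∧ NatLt b n' y ∧
          (P (s ++ [x, y]) (max n' ((supp b y).sup id) + 1) ∨ SwitchA b X C (s ++ [x, y])))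
    (hout : ∀ x y : ℕ → E, (∀ i, ∃ c, P (s0 ++ ivl x y i) c) →
      prefCat s0 (interleave x y) ∈ C) :
    IIWinsAEven b X s0 C := by
  classical
  have hann' : ∀ (s : List E) (c : ℕ), ∃ n', P s c →
      c < n' ∧ ∀ x : E, x ∈ X → x ≠ 0 → NatLt b n' x →
        ∀ Z : Submodule 𝔽 E, IsBlockSubspace b Z → Z ≤ X →
          ∃ y, y ∈ Z ∧ y ≠ 0 ∧ NatLt b n' y ∧
            (P (s ++ [x, y]) (max n' ((supp b y).sup id) + 1) ∨
              SwitchA b X C (s ++ [x, y])) := by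
    intro s c
    by_cases h : P s c
    · obtain ⟨n', hn⟩ := hstep s c h
      exact ⟨n', fun _ => hn⟩
    · exact ⟨0, fun hc => absurd hc h⟩
  choose ann hann using hann'
  have hy' : ∀ (s : List E) (c : ℕ) (x : E) (Z : Submodule 𝔽 E), ∃ y : E,
      P s c → x ∈ X → x ≠ 0 → NatLt b (ann s c) x → IsBlockSubspace b Z → Z ≤ X →
        y ∈ Z ∧ y ≠ 0 ∧ NatLt b (ann s c) y ∧
          (P (s ++ [x, y]) (max (ann s c) ((supp b y).sup id) + 1) ∨
            SwitchA b X C (s ++ [x, y])) := by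
    intro s c x Z
    by_cases h : P s c ∧ x ∈ X ∧ x ≠ 0 ∧ NatLt b (ann s c) x ∧ IsBlockSubspace b Z ∧ Z ≤ X
    · obtain ⟨y, hy⟩ := (hann s c h.1).2 x h.2.1 h.2.2.1 h.2.2.2.1 Z h.2.2.2.2.1 h.2.2.2.2.2
      exact ⟨y, fun _ _ _ _ _ _ => hy⟩
    · refine ⟨0, fun h1 h2 h3 h4 h5 h6 => absurd ⟨h1, h2, h3, h4, h5, h6⟩ h⟩
  choose ysel hysel using hy'
  have hswd' : ∀ u : List E, ∃ d : ℕ × ℕ × (List (E × Submodule 𝔽 E) → E × ℕ),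
      SwitchA b X C u → ∃ V : Submodule 𝔽 E, IsBlockSubspace b V ∧
        (∀ v ∈ X, v ≠ 0 → NatLt b d.1 v → v ∈ V) ∧ ABody b V u C d.2.1 d.2.2 := by
    intro u
    by_cases h : SwitchA b X C u
    · obtain ⟨N, n0, σ, V, h1, h2, h3⟩ := h
      exact ⟨(N, n0, σ), fun _ => ⟨V, h1, h2, h3⟩⟩
    · exact ⟨(0, 0, fun _ => (0, 0)), fun hc => absurd hc h⟩
  choose swd hswd using hswd'
  refine ⟨ann s0 b0,
    fun h => ((h.foldl (aStep b ann ysel (SwitchA b X C) swd)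
      (s0, b0, (0, ann s0 b0), none)).2.2.1), ?_⟩
  intro p hp
  set n0m : ℕ := ann s0 b0 with hn0m
  set σm : List (E × Submodule 𝔽 E) → E × ℕ :=
    fun h => ((h.foldl (aStep b ann ysel (SwitchA b X C) swd)
      (s0, b0, (0, ann s0 b0), none)).2.2.1) with hσm
  set st : ℕ → ASt 𝔽 E := fun i => (hist p i).foldl (aStep b ann ysel (SwitchA b X C) swd)
    (s0, b0, (0, ann s0 b0), none) with hstdef
  set xp : ℕ → E := fun i => (p i).1 with hxp
  set ys : ℕ → E := fun i => (st (i + 1)).2.2.1.1 with hys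
  set na : ℕ → ℕ := fun i => natsA n0m σm p i with hna
  have hst0 : st 0 = (s0, b0, (0, ann s0 b0), none) := rfl
  have hstS : ∀ i, st (i + 1) = aStep b ann ysel (SwitchA b X C) swd (st i) (p i) := by
    intro i
    rw [hstdef]
    simp only
    rw [hist_succ]; refine (List.foldl_append ..).trans ?_
    rfl
  have hna0 : na 0 = n0m := rfl
  have hnaS : ∀ i, na (i + 1) = (st (i + 1)).2.2.1.2 := fun i => rfl
  have hR : ∀ i, (p i).1 ∈ X ∧ (p i).1 ≠ 0 ∧ NatLt b (na i) (p i).1 ∧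
      VecLt b (p i).1 (p (i + 1)).1 ∧ IsBlockSubspace b (p i).2 ∧ (p i).2 ≤ X := hp
  suffices hsuff : (∀ i, ys i ∈ (p i).2 ∧ ys i ≠ 0 ∧ VecLt b (ys i) (ys (i + 1)) ∧
      na i < na (i + 1)) ∧ prefCat s0 (interleave xp ys) ∈ C by exact hsuff
  by_cases hnever : ∀ i, (st i).2.2.2 = none
  · -- never switch
    have hJ : ∀ i, (st i).1 = s0 ++ ivl xp ys i ∧ P (st i).1 (st i).2.1 ∧
        na i = ann (st i).1 (st i).2.1 ∧
        (∀ i', i = i' + 1 → na i' < (st i).2.1 ∧ ∀ t ∈ supp b (ys i'), t < (st i).2.1) := by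
      intro i
      induction i with
      | zero =>
        refine ⟨by rw [hst0]; simp [ivl], by rw [hst0]; exact hP0, by rw [hst0]; rfl,
          fun i' h => absurd h (by omega)⟩
      | succ i ih =>
        have hmd : st i = ((st i).1, (st i).2.1, (st i).2.2.1, none) := by
          rw [← hnever i]; rfl
        have hyi := hysel (st i).1 (st i).2.1 (p i).1 (p i).2 ih.2.1 (hR i).1 (hR i).2.1
          (by rw [← ih.2.2.1]; exact (hR i).2.2.1) (hR i).2.2.2.2.1 (hR i).2.2.2.2.2
        have hswF : ¬ SwitchA b X C
            ((st i).1 ++ [(p i).1, ysel (st i).1 (st i).2.1 (p i).1 (p i).2]) := by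
          intro hsw
          have hc := hnever (i + 1)
          rw [hstS i, hmd, show p i = ((p i).1, (p i).2) from rfl, aStep_none,
            if_pos hsw] at hc
          exact Option.some_ne_none _ hc
        have hst1 : st (i + 1) = ((st i).1 ++ [(p i).1, ysel (st i).1 (st i).2.1 (p i).1 (p i).2],
            max (ann (st i).1 (st i).2.1)
              ((supp b (ysel (st i).1 (st i).2.1 (p i).1 (p i).2)).sup id) + 1,
            (ysel (st i).1 (st i).2.1 (p i).1 (p i).2,
              ann ((st i).1 ++ [(p i).1, ysel (st i).1 (st i).2.1 (p i).1 (p i).2])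
                (max (ann (st i).1 (st i).2.1)
                  ((supp b (ysel (st i).1 (st i).2.1 (p i).1 (p i).2)).sup id) + 1)),
            none) := by
          rw [hstS i, hmd, show p i = ((p i).1, (p i).2) from rfl, aStep_none, if_neg hswF]
        have hysi : ys i = ysel (st i).1 (st i).2.1 (p i).1 (p i).2 := by
          rw [hys]; simp only; rw [hst1]
        have hPnew := hyi.2.2.2.resolve_right hswF
        refine ⟨?_, ?_, ?_, ?_⟩
        · rw [hst1]
          show (st i).1 ++ [(p i).1, ysel (st i).1 (st i).2.1 (p i).1 (p i).2] = _
          rw [← hysi, ih.1]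
          show _ = s0 ++ ivl xp ys (i + 1)
          rw [show ivl xp ys (i+1) = ivl xp ys i ++ [xp i, ys i] from rfl, ← List.append_assoc]
        · rw [hst1]
          show P ((st i).1 ++ [(p i).1, ysel (st i).1 (st i).2.1 (p i).1 (p i).2]) _
          exact hPnew
        · rw [hnaS i, hst1]
        · intro i' hi'
          have : i' = i := by omega
          subst this
          rw [hst1]
          constructor
          · show na i' < max (ann (st i').1 (st i').2.1) _ + 1
            rw [ih.2.2.1]
            have := le_max_left (ann (st i').1 (st i').2.1)
              ((supp b (ysel (st i').1 (st i').2.1 (p i').1 (p i').2)).sup id)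
            omega
          · intro t ht
            show t < max (ann (st i').1 (st i').2.1) _ + 1
            rw [hysi] at ht
            have h1 : t ≤ (supp b (ysel (st i').1 (st i').2.1 (p i').1 (p i').2)).sup id :=
              Finset.le_sup (f := id) ht
            have := le_max_right (ann (st i').1 (st i').2.1)
              ((supp b (ysel (st i').1 (st i').2.1 (p i').1 (p i').2)).sup id)
            omega
    have hmdi : ∀ i, st i = ((st i).1, (st i).2.1, (st i).2.2.1, none) := by
      intro i; rw [← hnever i]; rfl
    have hyi : ∀ i, (ys i ∈ (p i).2 ∧ ys i ≠ 0 ∧ NatLt b (na i) (ys i)) ∧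
        na i < (st (i + 1)).2.1 ∧ (∀ t ∈ supp b (ys i), t < (st (i + 1)).2.1) := by
      intro i
      have h1 := (hJ (i + 1)).2.2.2 i rfl
      have hsel := hysel (st i).1 (st i).2.1 (p i).1 (p i).2 (hJ i).2.1 (hR i).1 (hR i).2.1
        (by rw [← (hJ i).2.2.1]; exact (hR i).2.2.1) (hR i).2.2.2.2.1 (hR i).2.2.2.2.2
      have hswF : ¬ SwitchA b X C
          ((st i).1 ++ [(p i).1, ysel (st i).1 (st i).2.1 (p i).1 (p i).2]) := by
        intro hsw
        have hc := hnever (i + 1)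
        rw [hstS i, hmdi i, show p i = ((p i).1, (p i).2) from rfl, aStep_none,
          if_pos hsw] at hc
        exact Option.some_ne_none _ hc
      have hst1 := hstS i
      rw [hmdi i, show p i = ((p i).1, (p i).2) from rfl, aStep_none, if_neg hswF] at hst1
      have hysi : ys i = ysel (st i).1 (st i).2.1 (p i).1 (p i).2 := by
        rw [hys]; simp only; rw [hst1]
      refine ⟨⟨by rw [hysi]; exact hsel.1, by rw [hysi]; exact hsel.2.1, ?_⟩, h1.1, h1.2⟩
      rw [hysi, (hJ i).2.2.1]
      exact hsel.2.2.1
    refine ⟨fun i => ?_, ?_⟩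
    · refine ⟨(hyi i).1.1, (hyi i).1.2.1, ?_, ?_⟩
      · refine vecLt_of_natLt b (fun t ht => le_of_lt ((hyi i).2.2 t ht)) ?_
        refine natLt_mono b (hyi (i + 1)).1.2.2 ?_
        have h2 := (hann (st (i + 1)).1 (st (i + 1)).2.1 (hJ (i + 1)).2.1).1
        have h3 := (hJ (i + 1)).2.2.1
        omega
      · have h1 := (hyi i).2.1
        have h2 := (hann (st (i + 1)).1 (st (i + 1)).2.1 (hJ (i + 1)).2.1).1
        rw [← (hJ (i + 1)).2.2.1] at h2
        omega
    · exact hout xp ys (fun i => ⟨(st i).2.1, by rw [← (hJ i).1]; exact (hJ i).2.1⟩)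
  · -- a switch happens
    push_neg at hnever
    have hex : ∃ i, (st i).2.2.2 ≠ none := hnever
    obtain ⟨k, hk, hlt⟩ : ∃ k, (st k).2.2.2 ≠ none ∧ ∀ i < k, (st i).2.2.2 = none :=
      ⟨Nat.find hex, Nat.find_spec hex, fun i hi => not_not.1 (Nat.find_min hex hi)⟩
    obtain ⟨k', rfl⟩ : ∃ k', k = k' + 1 := by
      rcases Nat.eq_zero_or_pos k with h | h
      · exact absurd (by rw [h, hst0] : (st k).2.2.2 = none) hk
      · exact ⟨k - 1, by omega⟩
    have hJ : ∀ i, i ≤ k' → ((st i).1 = s0 ++ ivl xp ys i ∧ P (st i).1 (st i).2.1 ∧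
        na i = ann (st i).1 (st i).2.1 ∧
        (∀ i', i = i' + 1 → na i' < (st i).2.1 ∧ ∀ t ∈ supp b (ys i'), t < (st i).2.1)) := by
      intro i
      induction i with
      | zero =>
        exact fun _ => ⟨by rw [hst0]; simp [ivl], by rw [hst0]; exact hP0,
          by rw [hst0]; rfl, fun i' h => absurd h (by omega)⟩
      | succ i ih =>
        intro hle
        have ihh := ih (by omega)
        have hmd : st i = ((st i).1, (st i).2.1, (st i).2.2.1, none) := by
          rw [← hlt i (by omega)]; rfl
        have hyi := hysel (st i).1 (st i).2.1 (p i).1 (p i).2 ihh.2.1 (hR i).1 (hR i).2.1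
          (by rw [← ihh.2.2.1]; exact (hR i).2.2.1) (hR i).2.2.2.2.1 (hR i).2.2.2.2.2
        have hswF : ¬ SwitchA b X C
            ((st i).1 ++ [(p i).1, ysel (st i).1 (st i).2.1 (p i).1 (p i).2]) := by
          intro hsw
          have hc := hlt (i + 1) (by omega)
          rw [hstS i, hmd, show p i = ((p i).1, (p i).2) from rfl, aStep_none,
            if_pos hsw] at hc
          exact Option.some_ne_none _ hc
        have hst1 := hstS i
        rw [hmd, show p i = ((p i).1, (p i).2) from rfl, aStep_none, if_neg hswF] at hst1
        have hysi : ys i = ysel (st i).1 (st i).2.1 (p i).1 (p i).2 := by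
          rw [hys]; simp only; rw [hst1]
        have hPnew := hyi.2.2.2.resolve_right hswF
        refine ⟨?_, ?_, ?_, ?_⟩
        · rw [hst1]
          show (st i).1 ++ [(p i).1, ysel (st i).1 (st i).2.1 (p i).1 (p i).2] = _
          rw [← hysi, ihh.1]
          show _ = s0 ++ ivl xp ys (i + 1)
          rw [show ivl xp ys (i+1) = ivl xp ys i ++ [xp i, ys i] from rfl, ← List.append_assoc]
        · rw [hst1]
          show P ((st i).1 ++ [(p i).1, ysel (st i).1 (st i).2.1 (p i).1 (p i).2]) _
          exact hPnew
        · rw [hnaS i, hst1]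
        · intro i' hi'
          have : i' = i := by omega
          subst this
          rw [hst1]
          constructor
          · show na i' < max (ann (st i').1 (st i').2.1) _ + 1
            rw [ihh.2.2.1]
            have := le_max_left (ann (st i').1 (st i').2.1)
              ((supp b (ysel (st i').1 (st i').2.1 (p i').1 (p i').2)).sup id)
            omega
          · intro t ht
            show t < max (ann (st i').1 (st i').2.1) _ + 1
            rw [hysi] at ht
            have h1 : t ≤ (supp b (ysel (st i').1 (st i').2.1 (p i').1 (p i').2)).sup id :=
              Finset.le_sup (f := id) ht
            have := le_max_right (ann (st i').1 (st i').2.1)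
              ((supp b (ysel (st i').1 (st i').2.1 (p i').1 (p i').2)).sup id)
            omega
    -- the seam
    have hJk' := hJ k' le_rfl
    have hmdk' : st k' = ((st k').1, (st k').2.1, (st k').2.2.1, none) := by
      rw [← hlt k' (by omega)]; rfl
    have hyk' := hysel (st k').1 (st k').2.1 (p k').1 (p k').2 hJk'.2.1 (hR k').1 (hR k').2.1
      (by rw [← hJk'.2.2.1]; exact (hR k').2.2.1) (hR k').2.2.2.2.1 (hR k').2.2.2.2.2
    have hSW : SwitchA b X C
        ((st k').1 ++ [(p k').1, ysel (st k').1 (st k').2.1 (p k').1 (p k').2]) := by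
      by_contra hsw
      apply hk
      rw [hstS k', hmdk', show p k' = ((p k').1, (p k').2) from rfl, aStep_none, if_neg hsw]
    set posk : List E := (st k').1 ++ [(p k').1, ysel (st k').1 (st k').2.1 (p k').1 (p k').2]
      with hposkdef
    set bdk : ℕ := max (ann (st k').1 (st k').2.1)
      ((supp b (ysel (st k').1 (st k').2.1 (p k').1 (p k').2)).sup id) + 1 with hbdkdef
    set N : ℕ := max (swd posk).1 bdk with hNdef
    set n0' : ℕ := (swd posk).2.1 with hn0'def
    set σ' : List (E × Submodule 𝔽 E) → E × ℕ := (swd posk).2.2 with hσ'def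
    have hstk : st (k' + 1) = (posk, bdk,
        (ysel (st k').1 (st k').2.1 (p k').1 (p k').2, n0' + N + 1),
        some (N, n0', σ', [])) := by
      rw [hstS k', hmdk', show p k' = ((p k').1, (p k').2) from rfl, aStep_none, if_pos hSW]
    obtain ⟨V, hVblk, hVtail, hVbody⟩ := hswd posk hSW
    have hNd1 : (swd posk).1 ≤ N := by rw [hNdef]; exact le_max_left _ _
    have hNd2 : bdk ≤ N := by rw [hNdef]; exact le_max_right _ _
    have hysk' : ys k' = ysel (st k').1 (st k').2.1 (p k').1 (p k').2 := by
      rw [hys]; simp only; rw [hstk]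
    have hposid : posk = s0 ++ ivl xp ys (k' + 1) := by
      rw [hposkdef, ← hysk', hJk'.1]
      show _ = s0 ++ ivl xp ys (k' + 1)
      rw [show ivl xp ys (k'+1) = ivl xp ys k' ++ [xp k', ys k'] from rfl, ← List.append_assoc]
    have hnabd : na k' < bdk := by
      rw [hJk'.2.2.1, hbdkdef]
      have := le_max_left (ann (st k').1 (st k').2.1)
        ((supp b (ysel (st k').1 (st k').2.1 (p k').1 (p k').2)).sup id)
      omega
    -- switched invariant
    have hJ2 : ∀ t, st (k' + 1 + t) = (s0 ++ ivl xp ys (k' + 1 + t), bdk,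
        ((st (k' + 1 + t)).2.2.1.1,
          natsA n0' σ' (fun j => ((p (k' + 1 + j)).1, tailSub b (p (k' + 1 + j)).2 N)) t
            + N + 1),
        some (N, n0', σ',
          hist (fun j => ((p (k' + 1 + j)).1, tailSub b (p (k' + 1 + j)).2 N)) t)) := by
      intro t
      induction t with
      | zero =>
        rw [show k' + 1 + 0 = k' + 1 from rfl, hstk, hposid]
        rfl
      | succ t ih =>
        have hstep2 : st (k' + 1 + (t + 1)) =
            aStep b ann ysel (SwitchA b X C) swd (st (k' + 1 + t)) (p (k' + 1 + t)) := by
          rw [show k' + 1 + (t + 1) = (k' + 1 + t) + 1 from rfl]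
          exact hstS (k' + 1 + t)
        have hyst : ys (k' + 1 + t) = (σ'
            (hist (fun j => ((p (k' + 1 + j)).1, tailSub b (p (k' + 1 + j)).2 N)) (t + 1))).1 := by
          rw [hys]; simp only
          rw [show k' + 1 + t + 1 = k' + 1 + (t + 1) from rfl, hstep2, ih,
            show p (k' + 1 + t) = ((p (k' + 1 + t)).1, (p (k' + 1 + t)).2) from rfl, aStep_some]
          simp only
          rw [hist_succ]
        have hpos' : (s0 ++ ivl xp ys (k' + 1 + t)) ++ [(p (k' + 1 + t)).1,
            (σ' (hist (fun j => ((p (k' + 1 + j)).1, tailSub b (p (k' + 1 + j)).2 N))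
              (t + 1))).1] = s0 ++ ivl xp ys (k' + 1 + (t + 1)) := by
          rw [← hyst]
          rw [show ivl xp ys (k'+1+(t+1)) =
            ivl xp ys (k'+1+t) ++ [xp (k'+1+t), ys (k'+1+t)] from rfl, ← List.append_assoc]
        rw [hstep2, ih, show p (k' + 1 + t) = ((p (k' + 1 + t)).1, (p (k' + 1 + t)).2) from rfl,
          aStep_some]
        simp only
        rw [← hist_succ, hpos']
        rfl
    have hnaid : ∀ t, na (k' + 1 + t) =
        natsA n0' σ' (fun j => ((p (k' + 1 + j)).1, tailSub b (p (k' + 1 + j)).2 N)) t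
          + N + 1 := by
      intro t
      have e : k' + 1 + t = (k' + t) + 1 := by omega
      rw [e, hnaS]
      rw [← e, hJ2 t]
    have hysid : ∀ t, ys (k' + 1 + t) = (σ'
        (hist (fun j => ((p (k' + 1 + j)).1, tailSub b (p (k' + 1 + j)).2 N)) (t + 1))).1 := by
      intro t
      rw [hys]; simp only
      rw [show k' + 1 + t + 1 = (k' + 1 + t) + 1 from rfl, hstS (k' + 1 + t), hJ2 t,
        show p (k' + 1 + t) = ((p (k' + 1 + t)).1, (p (k' + 1 + t)).2) from rfl, aStep_some]
      simp only
      rw [hist_succ]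
    -- simulated play
    have hts : ∀ t, IsBlockSubspace b (tailSub b (p (k' + 1 + t)).2 N) ∧
        tailSub b (p (k' + 1 + t)).2 N ≤ (p (k' + 1 + t)).2 ∧
        ∀ v ∈ tailSub b (p (k' + 1 + t)).2 N, v ≠ 0 → NatLt b N v :=
      fun t => tailSub_spec b (hR (k' + 1 + t)).2.2.2.2.1 N
    have hsim : ∀ t, ((p (k' + 1 + t)).1, tailSub b (p (k' + 1 + t)).2 N).1 ∈ V ∧
        ((p (k' + 1 + t)).1, tailSub b (p (k' + 1 + t)).2 N).1 ≠ 0 ∧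
        NatLt b (natsA n0' σ'
          (fun j => ((p (k' + 1 + j)).1, tailSub b (p (k' + 1 + j)).2 N)) t)
          ((p (k' + 1 + t)).1, tailSub b (p (k' + 1 + t)).2 N).1 ∧
        VecLt b ((p (k' + 1 + t)).1, tailSub b (p (k' + 1 + t)).2 N).1
          ((p (k' + 1 + (t + 1))).1, tailSub b (p (k' + 1 + (t + 1))).2 N).1 ∧
        IsBlockSubspace b ((p (k' + 1 + t)).1, tailSub b (p (k' + 1 + t)).2 N).2 ∧
        ((p (k' + 1 + t)).1, tailSub b (p (k' + 1 + t)).2 N).2 ≤ V := by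
      intro t
      have hrule := hR (k' + 1 + t)
      have hnat := hrule.2.2.1
      rw [hnaid t] at hnat
      refine ⟨?_, hrule.2.1, ?_, hrule.2.2.2.1, (hts t).1, ?_⟩
      · exact hVtail _ hrule.1 hrule.2.1 (natLt_mono b hnat (by omega))
      · exact natLt_mono b hnat (by omega)
      · apply submodule_le_of_mem
        intro v hv hv0
        exact hVtail v ((hR (k' + 1 + t)).2.2.2.2.2 ((hts t).2.1 hv)) hv0
          (natLt_mono b ((hts t).2.2 v hv hv0) hNd1)
    have hconc := hVbody (fun t => ((p (k' + 1 + t)).1, tailSub b (p (k' + 1 + t)).2 N)) hsim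
    have hleg' := hconc.1
    have hCout := hconc.2
    constructor
    · -- legality
      intro i
      rcases lt_trichotomy i k' with hik | heq | hik
      · -- run rounds
        have hJi := hJ i (by omega)
        have hJi1 := hJ (i + 1) (by omega)
        have hysrun : ∀ j, j ≤ k' → ys j = ysel (st j).1 (st j).2.1 (p j).1 (p j).2 := by
          intro j hj
          have hmdj : st j = ((st j).1, (st j).2.1, (st j).2.2.1, none) := by
            rw [← hlt j (by omega)]; rfl
          rw [hys]; simp only
          rw [hstS j, hmdj, show p j = ((p j).1, (p j).2) from rfl, aStep_none]
          by_cases h : SwitchA b X C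
            ((st j).1 ++ [(p j).1, ysel (st j).1 (st j).2.1 (p j).1 (p j).2])
          · rw [if_pos h]
          · rw [if_neg h]
        have hyi := hysel (st i).1 (st i).2.1 (p i).1 (p i).2 hJi.2.1 (hR i).1 (hR i).2.1
          (by rw [← hJi.2.2.1]; exact (hR i).2.2.1) (hR i).2.2.2.2.1 (hR i).2.2.2.2.2
        have hyi1 := hysel (st (i + 1)).1 (st (i + 1)).2.1 (p (i + 1)).1 (p (i + 1)).2
          hJi1.2.1 (hR (i + 1)).1 (hR (i + 1)).2.1
          (by rw [← hJi1.2.2.1]; exact (hR (i + 1)).2.2.1) (hR (i + 1)).2.2.2.2.1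
          (hR (i + 1)).2.2.2.2.2
        have hysi : ys i = ysel (st i).1 (st i).2.1 (p i).1 (p i).2 := hysrun i (by omega)
        have hysi1 : ys (i + 1) = ysel (st (i + 1)).1 (st (i + 1)).2.1 (p (i + 1)).1
            (p (i + 1)).2 := hysrun (i + 1) (by omega)
        have hlast := hJi1.2.2.2 i rfl
        refine ⟨by rw [hysi]; exact hyi.1, by rw [hysi]; exact hyi.2.1, ?_, ?_⟩
        · refine vecLt_of_natLt b (fun t ht => le_of_lt (hlast.2 t ht)) ?_
          rw [hysi1]
          exact natLt_mono b hyi1.2.2.1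
            (le_of_lt (hann (st (i + 1)).1 (st (i + 1)).2.1 hJi1.2.1).1)
        · have h1 := hlast.1
          have h2 := (hann (st (i + 1)).1 (st (i + 1)).2.1 hJi1.2.1).1
          have h3 := hJi1.2.2.1
          omega
      · -- seam round
        rw [heq]
        have hlastk := hJk'.2.2.2
        refine ⟨by rw [hysk']; exact hyk'.1, by rw [hysk']; exact hyk'.2.1, ?_, ?_⟩
        · have h0 : ys (k' + 1) = ys (k' + 1 + 0) := by norm_num
          have hmem := (hleg' 0).1
          have hnz := (hleg' 0).2.1
          rw [← hysid 0] at hmem hnz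
          have hNlt : NatLt b N (ys (k' + 1 + 0)) := (hts 0).2.2 _ hmem hnz
          refine vecLt_of_natLt b (fun t ht => ?_) (by rw [h0]; exact hNlt)
          rw [hysk'] at ht
          have h1 : t ≤ (supp b (ysel (st k').1 (st k').2.1 (p k').1 (p k').2)).sup id :=
            Finset.le_sup (f := id) ht
          have h2 : (supp b (ysel (st k').1 (st k').2.1 (p k').1 (p k').2)).sup id < bdk := by
            rw [hbdkdef]
            have := le_max_right (ann (st k').1 (st k').2.1)
              ((supp b (ysel (st k').1 (st k').2.1 (p k').1 (p k').2)).sup id)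
            omega
          omega
        · have h0 : na (k' + 1) = na (k' + 1 + 0) := by norm_num
          rw [h0, hnaid 0]
          omega
      · -- switched rounds
        obtain ⟨t, rfl⟩ : ∃ t, i = k' + 1 + t := ⟨i - (k' + 1), by omega⟩
        have hmem := (hleg' t).1
        have hnz := (hleg' t).2.1
        have hni := (hleg' t).2.2.2
        rw [← hysid t] at hmem hnz
        refine ⟨(hts t).2.1 hmem, hnz, ?_, ?_⟩
        · show VecLt b (ys (k' + 1 + t)) (ys (k' + 1 + (t + 1)))
          rw [hysid t, hysid (t + 1)]
          exact (hleg' t).2.2.1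
        · show na (k' + 1 + t) < na (k' + 1 + (t + 1))
          rw [hnaid t, hnaid (t + 1)]
          have hni' : natsA n0' σ'
              (fun j => ((p (k' + 1 + j)).1, tailSub b (p (k' + 1 + j)).2 N)) t <
              natsA n0' σ'
              (fun j => ((p (k' + 1 + j)).1, tailSub b (p (k' + 1 + j)).2 N)) (t + 1) := hni
          omega
    · -- outcome
      have hfun : (fun t => (σ' (hist (fun j =>
          ((p (k' + 1 + j)).1, tailSub b (p (k' + 1 + j)).2 N)) (t + 1))).1) =
          fun t => ys (k' + 1 + t) := funext fun t => (hysid t).symm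
      rw [hfun, hposid] at hCout
      rw [spliceK s0 xp ys (k' + 1)]
      have e1 : (fun i => xp (i + (k' + 1))) = fun t => (p (k' + 1 + t)).1 := by
        funext i; rw [hxp]; simp only; congr 2; omega
      have e2 : (fun i => ys (i + (k' + 1))) = fun t => ys (k' + 1 + t) := by
        funext i; congr 1; omega
      rw [e1, e2]
      exact hCout

end MasterA2
section Aux3

open Function Submodule Set Classical

variable {𝔽 : Type} [Field 𝔽] {E : Type} [AddCommGroup E] [Module 𝔽 E]
variable (b : Module.Basis ℕ 𝔽 E)

lemma bbody_mono {V W : Submodule 𝔽 E} {u : List E} {C : Set (ℕ → E)} {τ}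
    (hWV : W ≤ V) (h : BBody b V u C τ) : BBody b W u C τ := by
  intro Z y hr
  exact h Z y (fun i => ⟨(hr i).1, le_trans (hr i).2.1 hWV, hWV (hr i).2.2.1,
    (hr i).2.2.2.1, (hr i).2.2.2.2⟩)

lemma iWinsBEven_mono {V W : Submodule 𝔽 E} {u : List E} {C : Set (ℕ → E)}
    (hWV : W ≤ V) (h : IWinsBEven b V u C) : IWinsBEven b W u C := by
  obtain ⟨τ, hτ⟩ := h
  exact ⟨τ, bbody_mono b hWV hτ⟩

lemma abody_mono {V W : Submodule 𝔽 E} {u : List E} {C : Set (ℕ → E)} {n0 σ}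
    (hWV : W ≤ V) (h : ABody b V u C n0 σ) : ABody b W u C n0 σ := by
  intro p hr
  exact h p (fun i => ⟨hWV (hr i).1, (hr i).2.1, (hr i).2.2.1, (hr i).2.2.2.1,
    (hr i).2.2.2.2.1, le_trans (hr i).2.2.2.2.2 hWV⟩)

lemma iIWinsAEven_mono {V W : Submodule 𝔽 E} {u : List E} {C : Set (ℕ → E)}
    (hWV : W ≤ V) (h : IIWinsAEven b V u C) : IIWinsAEven b W u C := by
  obtain ⟨n0, σ, hτ⟩ := h
  exact ⟨n0, σ, abody_mono b hWV hτ⟩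

/-- Pick a nonzero vector of `X` above `N`. -/
noncomputable def pickAbove (X : Submodule 𝔽 E) (N : ℕ) : E :=
  letI := Classical.propDecidable
  if h : IsBlockSubspace b X then (h.exists_above b N).choose else 0

lemma pickAbove_spec {X : Submodule 𝔽 E} (hX : IsBlockSubspace b X) (N : ℕ) :
    pickAbove b X N ∈ X ∧ pickAbove b X N ≠ 0 ∧ NatLt b N (pickAbove b X N) := by
  unfold pickAbove
  simp only [dif_pos hX]
  exact (hX.exists_above b N).choose_spec

/-- Fusion chain: a decreasing chain of block subspaces fulfilling a countable family
of requests whenever possible. -/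
lemma fuse (W0 : Submodule 𝔽 E) (hW0 : IsBlockSubspace b W0)
    (R : ℕ → Submodule 𝔽 E → Prop) :
    ∃ U : ℕ → Submodule 𝔽 E, U 0 = W0 ∧ (∀ j, IsBlockSubspace b (U j)) ∧
      (∀ j, U (j + 1) ≤ U j) ∧
      ∀ j, (∃ Z, IsBlockSubspace b Z ∧ Z ≤ U j ∧ R j Z) → R j (U (j + 1)) := by
  classical
  let step : ℕ → Submodule 𝔽 E → Submodule 𝔽 E := fun j Uj =>
    if h : ∃ Z, IsBlockSubspace b Z ∧ Z ≤ Uj ∧ R j Z then h.choose else Uj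
  have hstep : ∀ j Uj, IsBlockSubspace b Uj →
      IsBlockSubspace b (step j Uj) ∧ step j Uj ≤ Uj ∧
      ((∃ Z, IsBlockSubspace b Z ∧ Z ≤ Uj ∧ R j Z) → R j (step j Uj)) := by
    intro j Uj hUj
    by_cases h : ∃ Z, IsBlockSubspace b Z ∧ Z ≤ Uj ∧ R j Z
    · have hc := h.choose_spec
      simp only [step, dif_pos h]
      exact ⟨hc.1, hc.2.1, fun _ => hc.2.2⟩
    · simp only [step, dif_neg h]
      exact ⟨hUj, le_rfl, fun hc => absurd hc h⟩
  let U : ℕ → Submodule 𝔽 E := fun j => Nat.rec W0 step j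
  have hUS : ∀ j, U (j + 1) = step j (U j) := fun j => rfl
  have hblk : ∀ j, IsBlockSubspace b (U j) := by
    intro j
    induction j with
    | zero => exact hW0
    | succ j ih =>
      rw [hUS j]
      exact (hstep j (U j) ih).1
  refine ⟨U, rfl, hblk, fun j => by rw [hUS j]; exact (hstep j (U j) (hblk j)).2.1,
    fun j h => by rw [hUS j]; exact (hstep j (U j) (hblk j)).2.2 h⟩

/-- Diagonalization through a decreasing chain of block subspaces. -/
lemma diag (U : ℕ → Submodule 𝔽 E) (hblk : ∀ j, IsBlockSubspace b (U j))
    (hdec : ∀ j, U (j + 1) ≤ U j) :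
    ∃ X : Submodule 𝔽 E, IsBlockSubspace b X ∧ X ≤ U 0 ∧
      ∀ j, ∃ N, ∀ v ∈ X, v ≠ 0 → NatLt b N v → v ∈ U j := by
  classical
  have hle : ∀ i j, i ≤ j → U j ≤ U i := by
    intro i j hij
    induction j with
    | zero => have : i = 0 := by omega
              rw [this]
    | succ j ih =>
      rcases Nat.lt_or_ge i (j + 1) with h | h
      · exact le_trans (hdec j) (ih (by omega))
      · have : i = j + 1 := by omega
        rw [this]
  let w : ℕ → E := fun j =>
    Nat.rec (pickAbove b (U 0) 0) (fun j v => pickAbove b (U (j + 1)) ((supp b v).sup id)) j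
  have hwS : ∀ j, w (j + 1) = pickAbove b (U (j + 1)) ((supp b (w j)).sup id) := fun j => rfl
  have hw : ∀ j, w j ∈ U j ∧ w j ≠ 0 := by
    intro j
    cases j with
    | zero => exact ⟨(pickAbove_spec b (hblk 0) 0).1, (pickAbove_spec b (hblk 0) 0).2.1⟩
    | succ j =>
      rw [hwS j]
      exact ⟨(pickAbove_spec b (hblk (j + 1)) _).1, (pickAbove_spec b (hblk (j + 1)) _).2.1⟩
  have hwseq : IsBlockSeq b w := by
    refine ⟨fun j => (hw j).2, fun j => ?_⟩
    refine vecLt_of_natLt b (fun k hk => Finset.le_sup (f := id) hk) ?_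
    rw [hwS j]
    exact (pickAbove_spec b (hblk (j + 1)) _).2.2
  refine ⟨span 𝔽 (Set.range w), ⟨w, hwseq, rfl⟩, ?_, ?_⟩
  · rw [span_le]
    rintro _ ⟨j, rfl⟩
    exact hle 0 j (by omega) (hw j).1
  · intro j
    refine ⟨(Finset.range j).sup (fun i => (supp b (w i)).sup id), ?_⟩
    intro v hv hv0 hN
    have hsh := mem_span_shift b hwseq hv (k := j)
      (N := (Finset.range j).sup (fun i => (supp b (w i)).sup id)) ?_ hN
    · have : span 𝔽 (Set.range fun i => w (i + j)) ≤ U j := by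
        rw [span_le]
        rintro _ ⟨i, rfl⟩
        exact hle j (i + j) (by omega) (hw (i + j)).1
      exact this hsh
    · intro i hi m hm
      have h1 : m ≤ (supp b (w i)).sup id := Finset.le_sup (f := id) hm
      have h2 : (supp b (w i)).sup id ≤ (Finset.range j).sup (fun i => (supp b (w i)).sup id) :=
        Finset.le_sup (f := fun i => (supp b (w i)).sup id) (Finset.mem_range.2 hi)
      omega

end Aux3
section TrackHelpers

open Function Submodule Set Classical

lemma ivl_get {α : Type _} (x y : ℕ → α) (i j : ℕ) (h : j < (ivl x y i).length) :
    (ivl x y i).get ⟨j, h⟩ = interleave x y j := by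
  have hs := congrFun (spliceK ([] : List α) x y i) j
  rw [prefCat_nil] at hs
  have h2 : j < (([] : List α) ++ ivl x y i).length := by simpa using h
  rw [prefCat_lt _ _ h2] at hs
  exact hs.symm

variable {𝔽 : Type} [Field 𝔽] [Countable 𝔽] {E : Type} [AddCommGroup E] [Module 𝔽 E]
variable (b : Module.Basis ℕ 𝔽 E)

include b in
lemma exists_enum : ∃ f : ℕ → List E, Function.Surjective f := by
  haveI : Countable E := (Equiv.countable_iff b.repr.toEquiv).mpr inferInstance
  haveI : Countable (List E) := inferInstance
  haveI : Nonempty (List E) := ⟨[]⟩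
  exact exists_surjective_nat (List E)

/-- A trivial winning strategy for I in game `B` when every extension of `u` is in `C`. -/
lemma dummyB (X : Submodule 𝔽 E) (hX : IsBlockSubspace b X) (u : List E) (C : Set (ℕ → E))
    (hC : ∀ g : ℕ → E, prefCat u g ∈ C) : IWinsBEven b X u C := by
  refine masterB b X C (fun _ _ => True) u 0 trivial ?_ (fun x y _ => hC _)
  intro s n _ Z hZblk _
  obtain ⟨hx1, hx2, hx3⟩ := pickAbove_spec b hZblk n
  refine ⟨pickAbove b Z n, max n ((supp b (pickAbove b Z n)).sup id) + 1, hx1, hx2, hx3,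
    by have := le_max_left n ((supp b (pickAbove b Z n)).sup id); omega, ?_,
    fun y _ _ _ => Or.inl trivial⟩
  intro k hk
  have h1 : k ≤ (supp b (pickAbove b Z n)).sup id := Finset.le_sup (f := id) hk
  have h2 := le_max_right n ((supp b (pickAbove b Z n)).sup id)
  omega

/-- A trivial winning strategy for II in game `A` when every extension of `u` is in `C`. -/
lemma dummyA (X : Submodule 𝔽 E) (hX : IsBlockSubspace b X) (u : List E) (C : Set (ℕ → E))
    (hC : ∀ g : ℕ → E, prefCat u g ∈ C) : IIWinsAEven b X u C := by
  refine masterA b X C (fun _ _ => True) u 0 trivial ?_ (fun x y _ => hC _)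
  intro s c _
  refine ⟨c + 1, by omega, ?_⟩
  intro x _ _ _ Z hZblk _
  obtain ⟨hy1, hy2, hy3⟩ := pickAbove_spec b hZblk (c + 1)
  exact ⟨pickAbove b Z (c + 1), hy1, hy2, hy3, Or.inl trivial⟩

end TrackHelpers
section TrackClosed

open Function Submodule Set Classical

variable {𝔽 : Type} [Field 𝔽] [Countable 𝔽] {E : Type} [AddCommGroup E] [Module 𝔽 E]
variable [TopologicalSpace E] [DiscreteTopology E]
variable (b : Module.Basis ℕ 𝔽 E)

lemma track_closed (A : Set (ℕ → E)) (hA : IsClosed A) :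
    ∃ X : Submodule 𝔽 E, IsBlockSubspace b X ∧ (IIWinsA b X [] A ∨ IWinsB b X [] Aᶜ) := by
  classical
  obtain ⟨enum, henum⟩ := exists_enum b
  have hj0 : ∀ u : List E, enum ((henum u).choose) = u := fun u => (henum u).choose_spec
  set j0 : List E → ℕ := fun u => (henum u).choose with hj0def
  obtain ⟨U0, hU00, hU0blk, hU0dec, hU0spec⟩ := fuse b ⊤ (isBlockSubspace_top b)
    (fun j V => IWinsBEven b V (enum j) Aᶜ)
  set DEAD : List E → Prop := fun u => ∃ V, IsBlockSubspace b V ∧ V ≤ U0 (j0 u) ∧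
    IWinsBEven b V u Aᶜ with hDEADdef
  by_cases hroot : DEAD []
  · obtain ⟨V, hV1, _, hV3⟩ := hroot
    refine ⟨V, hV1, Or.inr ?_⟩
    show IWinsB b V [] Aᶜ
    simpa [IWinsB] using hV3
  · obtain ⟨X1, hX1blk, hX1le, hX1diag⟩ := diag b U0 hU0blk hU0dec
    obtain ⟨U1, hU10, hU1blk, hU1dec, hU1spec⟩ := fuse b X1 hX1blk
      (fun j Z => ∀ v ∈ Z, v ≠ 0 → DEAD (enum j ++ [v]))
    set ISafe : List E → Prop := fun t => ∃ Z, IsBlockSubspace b Z ∧ Z ≤ U1 (j0 t) ∧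
      ∀ v ∈ Z, v ≠ 0 → DEAD (t ++ [v]) with hISdef
    obtain ⟨X2, hX2blk, hX2le, hX2diag⟩ := diag b U1 hU1blk hU1dec
    obtain ⟨U2, hU20, hU2blk, hU2dec, hU2spec⟩ := fuse b X2 hX2blk
      (fun j Z => ∀ v ∈ Z, v ≠ 0 → ¬ ISafe (enum j ++ [v]))
    set GREEN : List E → Prop := fun s => ∃ Z, IsBlockSubspace b Z ∧ Z ≤ U2 (j0 s) ∧
      ∀ v ∈ Z, v ≠ 0 → ¬ ISafe (s ++ [v]) with hGRdef
    obtain ⟨X, hXblk, hXle, hXdiag⟩ := diag b U2 hU2blk hU2dec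
    have hXleX2 : X ≤ X2 := by rw [← hU20]; exact hXle
    have hXleX1 : X ≤ X1 := le_trans hXleX2 (by rw [← hU10]; exact hX2le)
    have hT1 : ∀ j, ∃ N, ∀ v ∈ X, v ≠ 0 → NatLt b N v → v ∈ U1 j := fun j =>
      (hX2diag j).imp (fun N hN v hv => hN v (hXleX2 hv))
    have hT0 : ∀ j, ∃ N, ∀ v ∈ X, v ≠ 0 → NatLt b N v → v ∈ U0 j := fun j =>
      (hX1diag j).imp (fun N hN v hv => hN v (hXleX1 hv))
    -- color lemmas
    have hD1 : ∀ u, DEAD u → SwitchB b X Aᶜ u := by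
      intro u hu
      have hfire := hU0spec (j0 u) (by rw [hj0 u]; exact hu)
      rw [hj0 u] at hfire
      obtain ⟨N, hN⟩ := hT0 (j0 u + 1)
      obtain ⟨τ, hτ⟩ := hfire
      exact ⟨N, τ, U0 (j0 u + 1), hU0blk _, hN, hτ⟩
    have hD2 : ∀ u, ¬ DEAD u → ∀ V, IsBlockSubspace b V → V ≤ X →
        ¬ IWinsBEven b V u Aᶜ := by
      intro u hu V hVblk hVX hW
      apply hu
      obtain ⟨N, hN⟩ := hT0 (j0 u)
      obtain ⟨hts1, hts2, hts3⟩ := tailSub_spec b hVblk N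
      refine ⟨tailSub b V N, hts1, ?_, iWinsBEven_mono b hts2 hW⟩
      exact submodule_le_of_mem (fun v hv hv0 => hN v (hVX (hts2 hv)) hv0 (hts3 v hv hv0))
    have hD3 : ∀ u, ¬ DEAD u → ∃ f ∈ A, ∀ j (hj : j < u.length), f j = u.get ⟨j, hj⟩ := by
      intro u hu
      by_contra hne
      refine hD2 u hu X hXblk le_rfl (dummyB b X hXblk u Aᶜ ?_)
      intro g hgA
      exact hne ⟨prefCat u g, hgA, fun j hj => prefCat_lt u g hj⟩
    have hD4 : ∀ t, ISafe t → ∃ N, ∀ v ∈ X, v ≠ 0 → NatLt b N v → DEAD (t ++ [v]) := by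
      intro t ht
      have hfire := hU1spec (j0 t) (by rw [hj0 t]; exact ht)
      rw [hj0 t] at hfire
      obtain ⟨N, hN⟩ := hT1 (j0 t + 1)
      exact ⟨N, fun v hv hv0 hNv => hfire v (hN v hv hv0 hNv) hv0⟩
    have hD5 : ∀ t, ¬ ISafe t → ∀ Z, IsBlockSubspace b Z → Z ≤ X → ∀ m,
        ∃ y, y ∈ Z ∧ y ≠ 0 ∧ NatLt b m y ∧ ¬ DEAD (t ++ [y]) := by
      intro t ht Z hZblk hZX m
      obtain ⟨N, hN⟩ := hT1 (j0 t)
      obtain ⟨hts1, hts2, hts3⟩ := tailSub_spec b hZblk (max m N)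
      by_cases hall : ∀ v ∈ tailSub b Z (max m N), v ≠ 0 → DEAD (t ++ [v])
      · exact absurd ⟨tailSub b Z (max m N), hts1,
          submodule_le_of_mem (fun v hv hv0 => hN v (hZX (hts2 hv)) hv0
            (natLt_mono b (hts3 v hv hv0) (le_max_right m N))), hall⟩ ht
      · push_neg at hall
        obtain ⟨y, hy1, hy2, hy3⟩ := hall
        exact ⟨y, hts2 hy1, hy2, natLt_mono b (hts3 y hy1 hy2) (le_max_left m N), hy3⟩
    have hD6 : ∀ s, GREEN s → ∃ N, ∀ v ∈ X, v ≠ 0 → NatLt b N v → ¬ ISafe (s ++ [v]) := by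
      intro s hs
      have hfire := hU2spec (j0 s) (by rw [hj0 s]; exact hs)
      rw [hj0 s] at hfire
      obtain ⟨N, hN⟩ := hXdiag (j0 s + 1)
      exact ⟨N, fun v hv hv0 hNv => hfire v (hN v hv hv0 hNv) hv0⟩
    have hD7 : ∀ s, ¬ GREEN s → ∀ Z, IsBlockSubspace b Z → Z ≤ X → ∀ m,
        ∃ x, x ∈ Z ∧ x ≠ 0 ∧ NatLt b m x ∧ ISafe (s ++ [x]) := by
      intro s hs Z hZblk hZX m
      obtain ⟨N, hN⟩ := hXdiag (j0 s)
      obtain ⟨hts1, hts2, hts3⟩ := tailSub_spec b hZblk (max m N)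
      by_cases hall : ∀ v ∈ tailSub b Z (max m N), v ≠ 0 → ¬ ISafe (s ++ [v])
      · exact absurd ⟨tailSub b Z (max m N), hts1,
          submodule_le_of_mem (fun v hv hv0 => hN v (hZX (hts2 hv)) hv0
            (natLt_mono b (hts3 v hv hv0) (le_max_right m N))), hall⟩ hs
      · push_neg at hall
        obtain ⟨x, hx1, hx2, hx3⟩ := hall
        exact ⟨x, hts2 hx1, hx2, natLt_mono b (hts3 x hx1 hx2) (le_max_left m N), hx3⟩
    have hC1 : ∀ s, ¬ DEAD s → GREEN s := by
      intro s hs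
      by_contra hg
      refine hD2 s hs X hXblk le_rfl ?_
      refine masterB b X Aᶜ (fun s' _ => s' = s) s 0 rfl ?_ ?_
      · intro s' n hP Z hZblk hZX
        rw [hP]
        obtain ⟨x, hx1, hx2, hx3, hx4⟩ := hD7 s hg Z hZblk hZX n
        obtain ⟨N4, hN4⟩ := hD4 _ hx4
        refine ⟨x, max N4 (max n ((supp b x).sup id)) + 1, hx1, hx2, hx3, ?_, ?_, ?_⟩
        · have h7 := le_max_left n ((supp b x).sup id)
          have h8 := le_max_right N4 (max n ((supp b x).sup id))
          omega
        · intro k hk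
          have h6 : k ≤ (supp b x).sup id := Finset.le_sup (f := id) hk
          have h7 := le_max_right n ((supp b x).sup id)
          have h8 := le_max_right N4 (max n ((supp b x).sup id))
          omega
        · intro y hy hy0 hyN
          right
          apply hD1
          have h9 : DEAD ((s ++ [x]) ++ [y]) := hN4 y hy hy0
            (natLt_mono b hyN (le_trans (le_max_left _ _) (Nat.le_succ _)))
          rw [show s ++ [x, y] = (s ++ [x]) ++ [y] by simp]
          exact h9
      · intro x y hPall
        exfalso
        obtain ⟨c, hc⟩ := hPall 1
        have hl := congrArg List.length hc
        rw [List.length_append, ivl_length] at hl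
        omega
    refine ⟨X, hXblk, Or.inl ?_⟩
    show IIWinsA b X [] A
    have : IIWinsAEven b X [] A := by
      refine masterA b X A (fun s _ => ¬ DEAD s) [] 0 hroot ?_ ?_
      · intro s c hs
        obtain ⟨N, hN⟩ := hD6 s (hC1 s hs)
        refine ⟨max N c + 1, by omega, ?_⟩
        intro x hx hx0 hxn Z hZblk hZX
        have hxsafe : ¬ ISafe (s ++ [x]) := hN x hx hx0
          (natLt_mono b hxn (le_trans (le_max_left _ _) (Nat.le_succ _)))
        obtain ⟨y, hy1, hy2, hy3, hy4⟩ := hD5 (s ++ [x]) hxsafe Z hZblk hZX (max N c + 1)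
        refine ⟨y, hy1, hy2, hy3, Or.inl ?_⟩
        rw [show s ++ [x, y] = (s ++ [x]) ++ [y] by simp]
        exact hy4
      · intro x y hall
        rw [prefCat_nil, ← hA.closure_eq]
        apply mem_closure_of_agree
        intro k
        obtain ⟨c, hc⟩ := hall k
        obtain ⟨f, hfA, hf⟩ := hD3 _ hc
        refine ⟨f, hfA, ?_⟩
        intro j hj
        have hjlen : j < (([] : List E) ++ ivl x y k).length := by
          simp [ivl_length]; omega
        rw [hf j hjlen]
        exact ivl_get x y k j (by simpa [ivl_length] using hjlen)
    simpa [IIWinsA] using this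

end TrackClosed
section TrackOpen

open Function Submodule Set Classical

variable {𝔽 : Type} [Field 𝔽] [Countable 𝔽] {E : Type} [AddCommGroup E] [Module 𝔽 E]
variable [TopologicalSpace E] [DiscreteTopology E]
variable (b : Module.Basis ℕ 𝔽 E)

lemma track_open (A : Set (ℕ → E)) (hA : IsOpen A) :
    ∃ X : Submodule 𝔽 E, IsBlockSubspace b X ∧ (IIWinsA b X [] A ∨ IWinsB b X [] Aᶜ) := by
  classical
  obtain ⟨enum, henum⟩ := exists_enum b
  have hj0 : ∀ u : List E, enum ((henum u).choose) = u := fun u => (henum u).choose_spec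
  set j0 : List E → ℕ := fun u => (henum u).choose with hj0def
  obtain ⟨U0, hU00, hU0blk, hU0dec, hU0spec⟩ := fuse b ⊤ (isBlockSubspace_top b)
    (fun j V => IIWinsAEven b V (enum j) A)
  set QDEAD : List E → Prop := fun u => ∃ V, IsBlockSubspace b V ∧ V ≤ U0 (j0 u) ∧
    IIWinsAEven b V u A with hQDEADdef
  by_cases hroot : QDEAD []
  · obtain ⟨V, hV1, _, hV3⟩ := hroot
    refine ⟨V, hV1, Or.inl ?_⟩
    show IIWinsA b V [] A
    simpa [IIWinsA] using hV3
  · obtain ⟨X1, hX1blk, hX1le, hX1diag⟩ := diag b U0 hU0blk hU0dec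
    obtain ⟨U1, hU10, hU1blk, hU1dec, hU1spec⟩ := fuse b X1 hX1blk
      (fun j Z => ∀ v ∈ Z, v ≠ 0 → ¬ QDEAD (enum j ++ [v]))
    set QSafe : List E → Prop := fun t => ∃ Z, IsBlockSubspace b Z ∧ Z ≤ U1 (j0 t) ∧
      ∀ v ∈ Z, v ≠ 0 → ¬ QDEAD (t ++ [v]) with hQSdef
    obtain ⟨X2, hX2blk, hX2le, hX2diag⟩ := diag b U1 hU1blk hU1dec
    obtain ⟨U2, hU20, hU2blk, hU2dec, hU2spec⟩ := fuse b X2 hX2blk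
      (fun j Z => ∀ v ∈ Z, v ≠ 0 → ¬ QSafe (enum j ++ [v]))
    set QRED : List E → Prop := fun s => ∃ Z, IsBlockSubspace b Z ∧ Z ≤ U2 (j0 s) ∧
      ∀ v ∈ Z, v ≠ 0 → ¬ QSafe (s ++ [v]) with hQRdef
    obtain ⟨X, hXblk, hXle, hXdiag⟩ := diag b U2 hU2blk hU2dec
    have hXleX2 : X ≤ X2 := by rw [← hU20]; exact hXle
    have hXleX1 : X ≤ X1 := le_trans hXleX2 (by rw [← hU10]; exact hX2le)
    have hT1 : ∀ j, ∃ N, ∀ v ∈ X, v ≠ 0 → NatLt b N v → v ∈ U1 j := fun j =>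
      (hX2diag j).imp (fun N hN v hv => hN v (hXleX2 hv))
    have hT0 : ∀ j, ∃ N, ∀ v ∈ X, v ≠ 0 → NatLt b N v → v ∈ U0 j := fun j =>
      (hX1diag j).imp (fun N hN v hv => hN v (hXleX1 hv))
    have hD1 : ∀ u, QDEAD u → SwitchA b X A u := by
      intro u hu
      have hfire := hU0spec (j0 u) (by rw [hj0 u]; exact hu)
      rw [hj0 u] at hfire
      obtain ⟨N, hN⟩ := hT0 (j0 u + 1)
      obtain ⟨n0, σ, hσ⟩ := hfire
      exact ⟨N, n0, σ, U0 (j0 u + 1), hU0blk _, hN, hσ⟩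
    have hD2 : ∀ u, ¬ QDEAD u → ∀ V, IsBlockSubspace b V → V ≤ X →
        ¬ IIWinsAEven b V u A := by
      intro u hu V hVblk hVX hW
      apply hu
      obtain ⟨N, hN⟩ := hT0 (j0 u)
      obtain ⟨hts1, hts2, hts3⟩ := tailSub_spec b hVblk N
      refine ⟨tailSub b V N, hts1, ?_, iIWinsAEven_mono b hts2 hW⟩
      exact submodule_le_of_mem (fun v hv hv0 => hN v (hVX (hts2 hv)) hv0 (hts3 v hv hv0))
    have hD3 : ∀ u, ¬ QDEAD u → ∃ f ∈ Aᶜ, ∀ j (hj : j < u.length), f j = u.get ⟨j, hj⟩ := by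
      intro u hu
      by_contra hne
      refine hD2 u hu X hXblk le_rfl (dummyA b X hXblk u A ?_)
      intro g
      by_contra hgA
      exact hne ⟨prefCat u g, hgA, fun j hj => prefCat_lt u g hj⟩
    have hD4 : ∀ t, QSafe t → ∃ N, ∀ v ∈ X, v ≠ 0 → NatLt b N v → ¬ QDEAD (t ++ [v]) := by
      intro t ht
      have hfire := hU1spec (j0 t) (by rw [hj0 t]; exact ht)
      rw [hj0 t] at hfire
      obtain ⟨N, hN⟩ := hT1 (j0 t + 1)
      exact ⟨N, fun v hv hv0 hNv => hfire v (hN v hv hv0 hNv) hv0⟩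
    have hD5 : ∀ t, ¬ QSafe t → ∀ Z, IsBlockSubspace b Z → Z ≤ X → ∀ m,
        ∃ y, y ∈ Z ∧ y ≠ 0 ∧ NatLt b m y ∧ QDEAD (t ++ [y]) := by
      intro t ht Z hZblk hZX m
      obtain ⟨N, hN⟩ := hT1 (j0 t)
      obtain ⟨hts1, hts2, hts3⟩ := tailSub_spec b hZblk (max m N)
      by_cases hall : ∀ v ∈ tailSub b Z (max m N), v ≠ 0 → ¬ QDEAD (t ++ [v])
      · exact absurd ⟨tailSub b Z (max m N), hts1,
          submodule_le_of_mem (fun v hv hv0 => hN v (hZX (hts2 hv)) hv0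
            (natLt_mono b (hts3 v hv hv0) (le_max_right m N))), hall⟩ ht
      · push_neg at hall
        obtain ⟨y, hy1, hy2, hy3⟩ := hall
        exact ⟨y, hts2 hy1, hy2, natLt_mono b (hts3 y hy1 hy2) (le_max_left m N), hy3⟩
    have hD6 : ∀ s, QRED s → ∃ N, ∀ v ∈ X, v ≠ 0 → NatLt b N v → ¬ QSafe (s ++ [v]) := by
      intro s hs
      have hfire := hU2spec (j0 s) (by rw [hj0 s]; exact hs)
      rw [hj0 s] at hfire
      obtain ⟨N, hN⟩ := hXdiag (j0 s + 1)
      exact ⟨N, fun v hv hv0 hNv => hfire v (hN v hv hv0 hNv) hv0⟩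
    have hD7 : ∀ s, ¬ QRED s → ∀ Z, IsBlockSubspace b Z → Z ≤ X → ∀ m,
        ∃ x, x ∈ Z ∧ x ≠ 0 ∧ NatLt b m x ∧ QSafe (s ++ [x]) := by
      intro s hs Z hZblk hZX m
      obtain ⟨N, hN⟩ := hXdiag (j0 s)
      obtain ⟨hts1, hts2, hts3⟩ := tailSub_spec b hZblk (max m N)
      by_cases hall : ∀ v ∈ tailSub b Z (max m N), v ≠ 0 → ¬ QSafe (s ++ [v])
      · exact absurd ⟨tailSub b Z (max m N), hts1,
          submodule_le_of_mem (fun v hv hv0 => hN v (hZX (hts2 hv)) hv0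
            (natLt_mono b (hts3 v hv hv0) (le_max_right m N))), hall⟩ hs
      · push_neg at hall
        obtain ⟨x, hx1, hx2, hx3⟩ := hall
        exact ⟨x, hts2 hx1, hx2, natLt_mono b (hts3 x hx1 hx2) (le_max_left m N), hx3⟩
    have hC1 : ∀ s, ¬ QDEAD s → ¬ QRED s := by
      intro s hs hg
      refine hD2 s hs X hXblk le_rfl ?_
      refine masterA b X A (fun s' _ => s' = s) s 0 rfl ?_ ?_
      · intro s' c hP
        rw [hP]
        obtain ⟨N, hN⟩ := hD6 s hg
        refine ⟨max N c + 1, by omega, ?_⟩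
        intro x hx hx0 hxn Z hZblk hZX
        have hxsafe : ¬ QSafe (s ++ [x]) := hN x hx hx0
          (natLt_mono b hxn (le_trans (le_max_left _ _) (Nat.le_succ _)))
        obtain ⟨y, hy1, hy2, hy3, hy4⟩ := hD5 (s ++ [x]) hxsafe Z hZblk hZX (max N c + 1)
        refine ⟨y, hy1, hy2, hy3, Or.inr ?_⟩
        apply hD1
        rw [show s ++ [x, y] = (s ++ [x]) ++ [y] by simp]
        exact hy4
      · intro x y hPall
        exfalso
        obtain ⟨c, hc⟩ := hPall 1
        have hl := congrArg List.length hc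
        rw [List.length_append, ivl_length] at hl
        omega
    refine ⟨X, hXblk, Or.inr ?_⟩
    show IWinsB b X [] Aᶜ
    have : IWinsBEven b X [] Aᶜ := by
      refine masterB b X Aᶜ (fun s _ => ¬ QDEAD s) [] 0 hroot ?_ ?_
      · intro s n hs Z hZblk hZX
        obtain ⟨x, hx1, hx2, hx3, hx4⟩ := hD7 s (hC1 s hs) Z hZblk hZX n
        obtain ⟨N4, hN4⟩ := hD4 _ hx4
        refine ⟨x, max N4 (max n ((supp b x).sup id)) + 1, hx1, hx2, hx3, ?_, ?_, ?_⟩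
        · have h7 := le_max_left n ((supp b x).sup id)
          have h8 := le_max_right N4 (max n ((supp b x).sup id))
          omega
        · intro k hk
          have h6 : k ≤ (supp b x).sup id := Finset.le_sup (f := id) hk
          have h7 := le_max_right n ((supp b x).sup id)
          have h8 := le_max_right N4 (max n ((supp b x).sup id))
          omega
        · intro y hy hy0 hyN
          left
          show ¬ QDEAD (s ++ [x, y])
          rw [show s ++ [x, y] = (s ++ [x]) ++ [y] by simp]
          exact hN4 y hy hy0
            (natLt_mono b hyN (le_trans (le_max_left _ _) (Nat.le_succ _)))
      · intro x y hall
        rw [prefCat_nil, ← hA.isClosed_compl.closure_eq]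
        apply mem_closure_of_agree
        intro k
        obtain ⟨c, hc⟩ := hall k
        obtain ⟨f, hfA, hf⟩ := hD3 _ hc
        refine ⟨f, hfA, ?_⟩
        intro j hj
        have hjlen : j < (([] : List E) ++ ivl x y k).length := by
          simp [ivl_length]; omega
        rw [hf j hjlen]
        exact ivl_get x y k j (by simpa [ivl_length] using hjlen)
    simpa [IWinsB] using this

end TrackOpen


theorem relational_dichotomy
    {𝔽 : Type} [Field 𝔽] [Countable 𝔽]
    {E : Type} [AddCommGroup E] [Module 𝔽 E]
    [TopologicalSpace E] [DiscreteTopology E]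
    (b : Module.Basis ℕ 𝔽 E) (A : Set (ℕ → E)) (hA : IsOpen A ∨ IsClosed A) :
    ∃ X : Submodule 𝔽 E, IsBlockSubspace b X ∧
      (IIWinsA b X [] A ∨ IWinsB b X [] Aᶜ) := by
  rcases hA with h | h
  · exact track_open b A h
  · exact track_closed b A h
end

section
/- Let 𝒜 ⊆ E^∞ and let X, Y be block subspaces with Y ⊆* X. If I has a strategy in the infinite asymptotic game F_X to play in 𝒜, then I has a strategy in F_Y to play in 𝒜. -/
section Defs

variable {𝔽 : Type} [Field 𝔽] {E : Type} [AddCommGroup E] [Module 𝔽 E]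

/-- Player II has a strategy in Gowers' game `G_X(pre)` below `X` to play in `A`:
player I plays infinite-dimensional subspaces `Y i ≤ X`, player II answers with a
nonzero vector of `Y i`, the vectors played by II forming a block sequence, and the
outcome (the prefix `pre` followed by II's vectors) lies in `A`. -/
def IIWinsG (b : Module.Basis ℕ 𝔽 E) (X : Submodule 𝔽 E) (pre : List E) (A : Set (ℕ → E)) :
    Prop :=
  ∃ σ : List (Submodule 𝔽 E) → E,
    ∀ Y : ℕ → Submodule 𝔽 E,
      (∀ i, Y i ≤ X ∧ ¬FiniteDimensional 𝔽 ↥(Y i)) →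
      (∀ i, σ (hist Y (i + 1)) ∈ Y i ∧ σ (hist Y (i + 1)) ≠ 0 ∧
          VecLt b (σ (hist Y (i + 1))) (σ (hist Y (i + 2)))) ∧
        prefCat pre (fun i => σ (hist Y (i + 1))) ∈ A

/-- Player I has a strategy in the infinite asymptotic game `F_X(pre)` below `X` to play
in `A`: player I plays strictly increasing natural numbers `n i`, player II answers with
nonzero vectors of `X` with `n i < x i` forming a block sequence, and the outcome
(the prefix `pre` followed by II's vectors) lies in `A`. -/
def IWinsF (b : Module.Basis ℕ 𝔽 E) (X : Submodule 𝔽 E) (pre : List E) (A : Set (ℕ → E)) :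
    Prop :=
  ∃ σ : List E → ℕ,
    ∀ x : ℕ → E,
      (∀ i, x i ∈ X ∧ x i ≠ 0 ∧ NatLt b (σ (hist x i)) (x i) ∧
          VecLt b (x i) (x (i + 1))) →
      (∀ i, σ (hist x i) < σ (hist x (i + 1))) ∧ prefCat pre x ∈ A

/-- A set `A ⊆ E^∞` is strategically Ramsey if for every block subspace `V` and every
finite block sequence `z`, there is a block subspace `W ≤ V` such that either II has a
strategy in `G_W(z)` to play in `A`, or I has a strategy in `F_W(z)` to play in `Aᶜ`. -/
def StrategicallyRamsey (b : Module.Basis ℕ 𝔽 E) (A : Set (ℕ → E)) : Prop :=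
  ∀ V : Submodule 𝔽 E, IsBlockSubspace b V → ∀ z : List E, IsFinBlockSeq b z →
    ∃ W : Submodule 𝔽 E, W ≤ V ∧ IsBlockSubspace b W ∧
      (IIWinsG b W z A ∨ IWinsF b W z Aᶜ)

/-- `Y ⊆* X`: `Y` is spanned by an infinite block sequence all but finitely many of
whose terms belong to `X`. -/
def SubsetStar (b : Module.Basis ℕ 𝔽 E) (Y X : Submodule 𝔽 E) : Prop :=
  ∃ y : ℕ → E, IsBlockSeq b y ∧ Y = Submodule.span 𝔽 (Set.range y) ∧
    ∃ N : ℕ, ∀ m, N ≤ m → y m ∈ X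

end Defs

section Aux

variable {𝔽 : Type} [Field 𝔽] {E : Type} [AddCommGroup E] [Module 𝔽 E]

lemma supp_nonempty_s12 (b : Module.Basis ℕ 𝔽 E) {v : E} (h : v ≠ 0) : (supp b v).Nonempty :=
  Finsupp.support_nonempty_iff.mpr (fun h0 => h (by
    have := congrArg b.repr.symm h0
    simpa using this))

lemma vecLt_of_lt (b : Module.Basis ℕ 𝔽 E) {y : ℕ → E} (hy : IsBlockSeq b y) :
    ∀ {m m' : ℕ}, m < m' → VecLt b (y m) (y m') := by
  intro m m' h
  induction m' with
  | zero => omega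
  | succ k ih =>
    rcases Nat.lt_succ_iff_lt_or_eq.mp h with h' | rfl
    · intro a ha c hc
      obtain ⟨t, ht⟩ := supp_nonempty_s12 b (hy.1 k)
      exact lt_trans (ih h' a ha t ht) (hy.2 k t ht c hc)
    · exact hy.2 m

lemma mem_of_supp_big (b : Module.Basis ℕ 𝔽 E) {y : ℕ → E} (hy : IsBlockSeq b y)
    (N K : ℕ) (hK : ∀ m < N, ∀ n ∈ supp b (y m), n ≤ K)
    (X : Submodule 𝔽 E) (hyX : ∀ m, N ≤ m → y m ∈ X)
    (v : E) (hv : v ∈ Submodule.span 𝔽 (Set.range y))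
    (hsupp : ∀ n ∈ supp b v, K < n) : v ∈ X := by
  obtain ⟨c, rfl⟩ := Finsupp.mem_span_range_iff_exists_finsupp.mp hv
  refine Submodule.sum_mem _ ?_
  intro m hm
  by_cases hmN : N ≤ m
  · exact Submodule.smul_mem _ _ (hyX m hmN)
  · push_neg at hmN
    exfalso
    obtain ⟨n, hn⟩ := supp_nonempty_s12 b (hy.1 m)
    have hcm : c m ≠ 0 := Finsupp.mem_support_iff.mp hm
    have key : b.repr (c.sum fun i a => a • y i) n = c m * b.repr (y m) n := by
      rw [map_finsuppSum]
      rw [Finsupp.sum_apply]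
      rw [Finsupp.sum]
      refine Finset.sum_eq_single m (fun i _ hne => ?_) (fun hnmem => absurd hnmem (by simpa using hm)) |>.trans ?_
      · have hzero : n ∉ supp b (y i) := by
          intro hni
          rcases lt_or_gt_of_ne hne with hlt | hgt
          · exact lt_irrefl n (vecLt_of_lt b hy hlt n hni n hn)
          · exact lt_irrefl n (vecLt_of_lt b hy hgt n hn n hni)
        have : b.repr (y i) n = 0 := Finsupp.notMem_support_iff.mp hzero
        simp [this]
      · simp
    have hne0 : b.repr (c.sum fun i a => a • y i) n ≠ 0 := by
      rw [key]
      exact mul_ne_zero hcm (Finsupp.mem_support_iff.mp hn)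
    have : n ∈ supp b (c.sum fun i a => a • y i) := Finsupp.mem_support_iff.mpr hne0
    exact absurd (hK m hmN n hn) (not_le.mpr (hsupp n this))

end Aux


theorem IWinsF_subsetStar
    {𝔽 : Type} [Field 𝔽] [Countable 𝔽]
    {E : Type} [AddCommGroup E] [Module 𝔽 E]
    (b : Module.Basis ℕ 𝔽 E) (A : Set (ℕ → E)) (X Y : Submodule 𝔽 E)
    (hX : IsBlockSubspace b X) (hY : IsBlockSubspace b Y)
    (hYX : SubsetStar b Y X) (h : IWinsF b X [] A) :
    IWinsF b Y [] A := by
  obtain ⟨σ, hσ⟩ := h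
  obtain ⟨y, hy, hYeq, N, hN⟩ := hYX
  set K := (Finset.range N).sup (fun m => (supp b (y m)).sup id) with hKdef
  have hK : ∀ m < N, ∀ n ∈ supp b (y m), n ≤ K := fun m hm n hn =>
    le_trans (Finset.le_sup (f := id) hn)
      (Finset.le_sup (f := fun m => (supp b (y m)).sup id) (Finset.mem_range.mpr hm))
  have hmem : ∀ v ∈ Y, (∀ n ∈ supp b v, K < n) → v ∈ X := fun v hv hs =>
    mem_of_supp_big b hy N K hK X hN v (hYeq ▸ hv) hs
  refine ⟨fun l => σ l + K, ?_⟩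
  intro x hx
  have hx' : ∀ i, x i ∈ X ∧ x i ≠ 0 ∧ NatLt b (σ (hist x i)) (x i) ∧
      VecLt b (x i) (x (i + 1)) := by
    intro i
    obtain ⟨hmemY, hne, hnat, hlt⟩ := hx i
    exact ⟨hmem _ hmemY (fun n hn => lt_of_le_of_lt (Nat.le_add_left K _) (hnat n hn)),
      hne, fun n hn => lt_of_le_of_lt (Nat.le_add_right _ _) (hnat n hn), hlt⟩
  obtain ⟨hinc, hA⟩ := hσ x hx'
  exact ⟨fun i => Nat.add_lt_add_right (hinc i) K, hA⟩
end
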